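/- arXiv:1905.08268 — 7 statements merged into one kernel-verified Lean document; each statement's English description precedes it below -/
import Mathlib

section
/- For a probability distribution P_X on a finite set and ε ∈ (0,1), the quadratic program f_QP(P_X, ε) := inf { Σ_x g_x² : Σ_x g_x p_x ≥ √(1−ε²), 0 ≤ g_x ≤ 1 } has an optimal solution of the form g_x = min(a*·p_x/2, 1) for some a* ≥ 0, and at this optimum the constraint Σ_x g_x p_x ≥ √(1−ε²) holds with equality. -/
open Finset

/-- The quadratic program `f_QP(P_X, ε)` from the paper:
`inf { Σ_x g_x² : Σ_x g_x p_x ≥ √(1−ε²), 0 ≤ g_x ≤ 1 }`. -/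
noncomputable def fQP {ι : Type*} [Fintype ι] (p : ι → ℝ) (ε : ℝ) : ℝ :=
  sInf {v : ℝ | ∃ g : ι → ℝ, (∀ x, 0 ≤ g x ∧ g x ≤ 1) ∧
    Real.sqrt (1 - ε ^ 2) ≤ ∑ x, g x * p x ∧ v = ∑ x, (g x) ^ 2}

/-- Key optimality inequality: the truncated-linear solution minimizes the sum of squares. -/
lemma qp_key {ι : Type*} [Fintype ι] (p g : ι → ℝ) (a : ℝ) (ha : 0 ≤ a)
    (hg1 : ∀ x, g x ≤ 1)
    (hcon : ∑ x, min (a * p x / 2) 1 * p x ≤ ∑ x, g x * p x) :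
    ∑ x, (min (a * p x / 2) 1) ^ 2 ≤ ∑ x, (g x) ^ 2 := by
  set q : ι → ℝ := fun x => min (a * p x / 2) 1 with hq
  have hpt : ∀ x, a / 2 * (p x * (g x - q x)) ≤ q x * (g x - q x) := by
    intro x
    rcases le_or_gt (a * p x / 2) 1 with h | h
    · have hqx : q x = a * p x / 2 := min_eq_left h
      exact le_of_eq (by rw [hqx]; ring)
    · have hqx : q x = 1 := min_eq_right h.le
      have hle : g x - q x ≤ 0 := by rw [hqx]; linarith [hg1 x]
      have : a * p x / 2 * (g x - q x) ≤ q x * (g x - q x) := by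
        rw [hqx] at hle ⊢
        exact mul_le_mul_of_nonpos_right h.le hle
      calc a / 2 * (p x * (g x - q x)) = a * p x / 2 * (g x - q x) := by ring
        _ ≤ q x * (g x - q x) := this
  have h0 : 0 ≤ ∑ x, p x * (g x - q x) := by
    have : ∑ x, p x * (g x - q x) = ∑ x, g x * p x - ∑ x, q x * p x := by
      rw [← Finset.sum_sub_distrib]; apply Finset.sum_congr rfl; intros; ring
    rw [this]; linarith
  have h1 : 0 ≤ ∑ x, q x * (g x - q x) := by
    calc (0:ℝ) ≤ a / 2 * ∑ x, p x * (g x - q x) := by positivity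
      _ = ∑ x, a / 2 * (p x * (g x - q x)) := by rw [Finset.mul_sum]
      _ ≤ ∑ x, q x * (g x - q x) := Finset.sum_le_sum fun x _ => hpt x
  have hsq : 0 ≤ ∑ x, (g x - q x) ^ 2 := Finset.sum_nonneg fun x _ => sq_nonneg _
  have hdecomp : ∑ x, (g x) ^ 2
      = ∑ x, (q x) ^ 2 + (∑ x, (g x - q x) ^ 2 + 2 * ∑ x, q x * (g x - q x)) := by
    rw [Finset.mul_sum, ← Finset.sum_add_distrib, ← Finset.sum_add_distrib]
    apply Finset.sum_congr rfl; intros; ring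
  linarith

/-- the QP has an optimizer of the form `g_x = min(a⋆ p_x / 2, 1)` for some
`a⋆ ≥ 0`, which is feasible, attains the optimal value, and satisfies the linear
constraint with equality. -/
theorem qp_optimizer_form {ι : Type*} [Fintype ι] (p : ι → ℝ) (ε : ℝ)
    (hp : ∀ x, 0 ≤ p x) (hps : ∑ x, p x = 1) (hε : ε ∈ Set.Ioo (0 : ℝ) 1) :
    ∃ a : ℝ, 0 ≤ a ∧
      (∀ x, 0 ≤ min (a * p x / 2) 1 ∧ min (a * p x / 2) 1 ≤ 1) ∧
      (∑ x, min (a * p x / 2) 1 * p x = Real.sqrt (1 - ε ^ 2)) ∧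
      (∑ x, (min (a * p x / 2) 1) ^ 2 = fQP p ε) := by
  obtain ⟨hε0, hε1⟩ := hε
  set s : ℝ := Real.sqrt (1 - ε ^ 2) with hs
  have hs0 : 0 ≤ s := Real.sqrt_nonneg _
  have hssq : s ^ 2 = 1 - ε ^ 2 := Real.sq_sqrt (by nlinarith)
  have hs1 : s < 1 := by nlinarith
  -- nonempty index type
  have hne : Nonempty ι := by
    rcases isEmpty_or_nonempty ι with h | h
    · simp at hps
    · exact h
  -- the constraint function
  set F : ℝ → ℝ := fun a => ∑ x, min (a * p x / 2) 1 * p x with hF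
  have hFcont : Continuous F := by
    apply continuous_finset_sum
    intro x _
    exact (((continuous_id.mul continuous_const).div_const 2).min continuous_const).mul
      continuous_const
  have hF0 : F 0 = 0 := by simp [hF]
  -- a large a₀ makes F a₀ = 1
  haveI := hne
  obtain ⟨a₀, ha₀⟩ : ∃ a₀ : ℝ, ∀ x : ι, 2 / p x ≤ a₀ := Finite.exists_le _
  have ha₀0 : 0 ≤ a₀ :=
    le_trans (div_nonneg (by norm_num) (hp (Classical.arbitrary ι))) (ha₀ (Classical.arbitrary ι))
  have hFa₀ : F a₀ = 1 := by
    have hterm : ∀ x ∈ Finset.univ, min (a₀ * p x / 2) 1 * p x = p x := by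
      intro x _
      rcases eq_or_lt_of_le (hp x) with h | h
      · simp [← h]
      · have h1 : 1 ≤ a₀ * p x / 2 := by
          have := ha₀ x
          rw [div_le_iff₀ h] at this
          linarith
        rw [min_eq_right h1, one_mul]
    rw [show F a₀ = ∑ x, min (a₀ * p x / 2) 1 * p x from rfl,
      Finset.sum_congr rfl hterm, hps]
  -- intermediate value theorem
  have hmem : s ∈ Set.Icc (F 0) (F a₀) := by rw [hF0, hFa₀]; exact ⟨hs0, hs1.le⟩
  obtain ⟨a, ha_mem, haF⟩ := intermediate_value_Icc ha₀0 hFcont.continuousOn hmem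
  have ha0 : 0 ≤ a := ha_mem.1
  refine ⟨a, ha0, ?_, haF, ?_⟩
  · intro x
    constructor
    · exact le_min (div_nonneg (mul_nonneg ha0 (hp x)) (by norm_num)) zero_le_one
    · exact min_le_right _ _
  · -- optimal value
    set q : ι → ℝ := fun x => min (a * p x / 2) 1 with hq
    have hqfeas : ∀ x, 0 ≤ q x ∧ q x ≤ 1 := fun x =>
      ⟨le_min (div_nonneg (mul_nonneg ha0 (hp x)) (by norm_num)) zero_le_one, min_le_right _ _⟩
    have hqcon : s ≤ ∑ x, q x * p x := le_of_eq haF.symm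
    have hmemS : (∑ x, (q x) ^ 2) ∈ {v : ℝ | ∃ g : ι → ℝ, (∀ x, 0 ≤ g x ∧ g x ≤ 1) ∧
        Real.sqrt (1 - ε ^ 2) ≤ ∑ x, g x * p x ∧ v = ∑ x, (g x) ^ 2} :=
      ⟨q, hqfeas, hqcon, rfl⟩
    apply le_antisymm
    · apply le_csInf ⟨_, hmemS⟩
      rintro v ⟨g, hgfeas, hgcon, rfl⟩
      exact qp_key p g a ha0 (fun x => (hgfeas x).2)
        (le_trans (le_of_eq haF) hgcon)
    · apply csInf_le
      · refine ⟨0, ?_⟩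
        rintro v ⟨g, hgfeas, hgcon, rfl⟩
        exact Finset.sum_nonneg fun x _ => sq_nonneg _
      · exact hmemS
end

section
/- For any probability distribution P_X on a finite set and ε ∈ (0,1), there exists η ≥ 0 (namely η = (a*/2)·Σ_x p_x²·𝟙{a*·p_x/2 < 1} for an optimizer a* of the QP) such that f_QP(P_X, ε) ≥ β_{√(1−ε²) − η}(P_X, 𝟙). -/
open Finset

/-- The classical hypothesis testing quantity `β_α(P_X, 𝟙)`. -/
noncomputable def beta {ι : Type*} [Fintype ι] (α : ℝ) (p : ι → ℝ) : ℝ :=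
  sInf {v : ℝ | ∃ Λ : ι → ℝ, (∀ x, 0 ≤ Λ x ∧ Λ x ≤ 1) ∧
    α ≤ ∑ x, Λ x * p x ∧ v = ∑ x, Λ x}

/-- there is an `η ≥ 0` (namely `η = (a⋆/2) Σ_x p_x² 𝟙{a⋆ p_x/2 < 1}` for an
optimizer `a⋆` of the single-variable QP, satisfying `Σ_x min(a⋆ p_x/2,1) p_x = √(1−ε²)`)
with `f_QP(P_X, ε) ≥ β_{√(1−ε²) − η}(P_X, 𝟙)`. -/
theorem qp_ge_beta_shifted {ι : Type*} [Fintype ι] (p : ι → ℝ) (ε : ℝ)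
    (hp : ∀ x, 0 ≤ p x) (hps : ∑ x, p x = 1) (hε : ε ∈ Set.Ioo (0 : ℝ) 1) :
    ∃ a η : ℝ, 0 ≤ a ∧ 0 ≤ η ∧
      (∑ x, min (a * p x / 2) 1 * p x = Real.sqrt (1 - ε ^ 2)) ∧
      (∑ x, (min (a * p x / 2) 1) ^ 2 = fQP p ε) ∧
      η = a / 2 * ∑ x, (if a * p x / 2 < 1 then (p x) ^ 2 else 0) ∧
      beta (Real.sqrt (1 - ε ^ 2) - η) p ≤ fQP p ε := by
  obtain ⟨hε0, hε1⟩ := hε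
  set S := Real.sqrt (1 - ε ^ 2) with hS
  have hS0 : 0 ≤ S := Real.sqrt_nonneg _
  have hS1 : S ≤ 1 := by
    have h := Real.sqrt_le_sqrt (show (1 : ℝ) - ε ^ 2 ≤ 1 by nlinarith)
    simpa [hS] using h
  have hF : Continuous fun a : ℝ => ∑ x, min (a * p x / 2) 1 * p x := by
    apply continuous_finset_sum; intro x _; fun_prop
  set A : ℝ := 2 * ∑ x, (if 0 < p x then (p x)⁻¹ else 0) with hA
  have hsnn : ∀ x, (0:ℝ) ≤ if 0 < p x then (p x)⁻¹ else 0 := by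
    intro x; split_ifs with h
    · positivity
    · exact le_refl 0
  have hA0 : 0 ≤ A := by
    apply mul_nonneg (by norm_num)
    exact Finset.sum_nonneg fun x _ => hsnn x
  have hFA : (∑ x, min (A * p x / 2) 1 * p x) = 1 := by
    have hcong : (∑ x, min (A * p x / 2) 1 * p x) = ∑ x, p x := by
      apply Finset.sum_congr rfl
      intro x _
      rcases eq_or_lt_of_le (hp x) with h | h
      · rw [← h]; simp
      · have hx : (p x)⁻¹ ≤ ∑ y, (if 0 < p y then (p y)⁻¹ else 0) := by
          have := Finset.single_le_sum (f := fun y => if 0 < p y then (p y)⁻¹ else 0)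
            (fun y _ => hsnn y) (Finset.mem_univ x)
          simpa [h] using this
        have h1 : 1 ≤ A * p x / 2 := by
          have := mul_le_mul_of_nonneg_right hx (hp x)
          rw [inv_mul_cancel₀ (ne_of_gt h)] at this
          rw [hA]; linarith
        rw [min_eq_right h1, one_mul]
    rw [hcong, hps]
  have hIcc : S ∈ Set.Icc ((fun a : ℝ => ∑ x, min (a * p x / 2) 1 * p x) 0)
      ((fun a : ℝ => ∑ x, min (a * p x / 2) 1 * p x) A) := by
    constructor
    · simpa using hS0
    · simpa [hFA] using hS1
  obtain ⟨a, ha_mem, haS⟩ := intermediate_value_Icc hA0 hF.continuousOn hIcc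
  have ha0 : 0 ≤ a := ha_mem.1
  simp only at haS
  set g : ι → ℝ := fun x => min (a * p x / 2) 1 with hg
  have hg01 : ∀ x, 0 ≤ g x ∧ g x ≤ 1 := by
    intro x
    exact ⟨le_min (div_nonneg (mul_nonneg ha0 (hp x)) (by norm_num)) (by norm_num),
      min_le_right _ _⟩
  have hfQP : fQP p ε = ∑ x, (g x) ^ 2 := by
    have hmem : (∑ x, (g x) ^ 2) ∈ {v : ℝ | ∃ g' : ι → ℝ, (∀ x, 0 ≤ g' x ∧ g' x ≤ 1) ∧
        Real.sqrt (1 - ε ^ 2) ≤ ∑ x, g' x * p x ∧ v = ∑ x, (g' x) ^ 2} :=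
      ⟨g, hg01, le_of_eq haS.symm, rfl⟩
    have hbdd : BddBelow {v : ℝ | ∃ g' : ι → ℝ, (∀ x, 0 ≤ g' x ∧ g' x ≤ 1) ∧
        Real.sqrt (1 - ε ^ 2) ≤ ∑ x, g' x * p x ∧ v = ∑ x, (g' x) ^ 2} := by
      refine ⟨0, ?_⟩
      rintro v ⟨g', _, _, rfl⟩
      exact Finset.sum_nonneg fun x _ => sq_nonneg _
    rw [fQP]
    apply le_antisymm
    · exact csInf_le hbdd hmem
    · apply le_csInf ⟨_, hmem⟩
      rintro v ⟨g', hg'01, hg'c, rfl⟩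
      have key : ∀ x, (g x) ^ 2 + a * p x * (g' x - g x) ≤ (g' x) ^ 2 := by
        intro x
        have h1 : (a * p x / 2) * (g' x - g x) ≤ g x * (g' x - g x) := by
          rcases le_or_gt (a * p x / 2) 1 with h | h
          · have hgx : g x = a * p x / 2 := min_eq_left h
            rw [hgx]
          · have hgx : g x = 1 := min_eq_right h.le
            have hle : g' x - g x ≤ 0 := by
              have := (hg'01 x).2; rw [hgx]; linarith
            rw [hgx]; nlinarith
        nlinarith [sq_nonneg (g' x - g x)]
      have hsum := Finset.sum_le_sum (s := Finset.univ) (fun x _ => key x)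
      rw [Finset.sum_add_distrib] at hsum
      have expand : ∑ x, a * p x * (g' x - g x)
          = a * ((∑ x, g' x * p x) - ∑ x, g x * p x) := by
        rw [mul_sub, Finset.mul_sum, Finset.mul_sum, ← Finset.sum_sub_distrib]
        exact Finset.sum_congr rfl fun x _ => by ring
      rw [expand, haS] at hsum
      have hnn : 0 ≤ a * ((∑ x, g' x * p x) - S) := mul_nonneg ha0 (by linarith [hg'c])
      linarith
  set η : ℝ := a / 2 * ∑ x, (if a * p x / 2 < 1 then (p x) ^ 2 else 0) with hη
  have hη0 : 0 ≤ η := by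
    apply mul_nonneg (by positivity)
    apply Finset.sum_nonneg
    intro x _; split_ifs <;> positivity
  refine ⟨a, η, ha0, hη0, haS, hfQP.symm, rfl, ?_⟩
  have hΛc : S - η ≤ ∑ x, (g x) ^ 2 * p x := by
    have ptwise : ∀ x, g x * p x - (g x) ^ 2 * p x
        ≤ a / 2 * (if a * p x / 2 < 1 then (p x) ^ 2 else 0) := by
      intro x
      by_cases h : a * p x / 2 < 1
      · rw [if_pos h]
        have hgx : g x = a * p x / 2 := min_eq_left h.le
        rw [hgx]
        nlinarith [mul_nonneg (sq_nonneg (a * p x / 2)) (hp x)]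
      · rw [if_neg h]
        push_neg at h
        have hgx : g x = 1 := min_eq_right h
        rw [hgx]; norm_num
    have hsum := Finset.sum_le_sum (s := Finset.univ) (fun x _ => ptwise x)
    rw [Finset.sum_sub_distrib, ← Finset.mul_sum, haS] at hsum
    rw [hη]
    linarith
  have hb : beta (S - η) p ≤ ∑ x, (g x) ^ 2 := by
    rw [beta]
    have hmem : (∑ x, (g x) ^ 2) ∈ {v : ℝ | ∃ Λ : ι → ℝ, (∀ x, 0 ≤ Λ x ∧ Λ x ≤ 1) ∧
        S - η ≤ ∑ x, Λ x * p x ∧ v = ∑ x, Λ x} := by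
      refine ⟨fun x => (g x) ^ 2, fun x => ⟨sq_nonneg _, ?_⟩, hΛc, rfl⟩
      show (g x) ^ 2 ≤ 1
      have h1 := (hg01 x).1; have h2 := (hg01 x).2
      nlinarith
    have hbdd : BddBelow {v : ℝ | ∃ Λ : ι → ℝ, (∀ x, 0 ≤ Λ x ∧ Λ x ≤ 1) ∧
        S - η ≤ ∑ x, Λ x * p x ∧ v = ∑ x, Λ x} := by
      refine ⟨0, ?_⟩
      rintro v ⟨Λ, hΛ, _, rfl⟩
      exact Finset.sum_nonneg fun x _ => (hΛ x).1
    exact csInf_le hbdd hmem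
  rw [hfQP]
  exact hb
end

section
/- Let ρ_AR = Σ_x √(p_x) |xx⟩ be a pure bipartite state with Schmidt coefficients p_x and let Π = Σ_x |xx⟩⟨xx|. If the pair (σ_AR, λ) satisfies λ·𝟙_A ⊗ ρ_R ≥ σ_AR, Tr[ρ_AR σ_AR] ≥ 1 − ε², σ_R ≤ ρ_R, σ_AR ≥ 0, then (Π σ_AR Π, λ) satisfies the same constraints. -/
open Matrix Finset
open scoped ComplexOrder Kronecker

/-- Outer product `|v⟩⟨v|`. -/
def outer {n : Type*} (v : n → ℂ) : Matrix n n ℂ :=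
  Matrix.of fun i j => v i * star (v j)

/-- Partial trace over the first (A) factor. -/
noncomputable def ptraceA {dA dR : ℕ} (σ : Matrix (Fin dA × Fin dR) (Fin dA × Fin dR) ℂ) :
    Matrix (Fin dR) (Fin dR) ℂ :=
  Matrix.of fun r r' => ∑ a, σ (a, r) (a, r')

/-- The purification vector `|ρ⟩ = Σ_x √(p_x) |xx⟩`. -/
noncomputable def schmidtVec {d : ℕ} (p : Fin d → ℝ) : Fin d × Fin d → ℂ :=
  fun xy => if xy.1 = xy.2 then (Real.sqrt (p xy.1) : ℂ) else 0

lemma psd_diag_entry {n : Type*} [Fintype n] [DecidableEq n] {M : Matrix n n ℂ}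
    (h : M.PosSemidef) (i : n) : 0 ≤ M i i := by
  exact h.diag_nonneg

/-- if `(σ_AR, λ)` is feasible for the partially smoothed min-entropy SDP of
the pure state `ρ_AR = Σ_x √p_x |xx⟩` (with pure-state smoothing constraint
`Tr[ρ_AR σ_AR] ≥ 1 − ε²`), then so is `(Pr σ_AR Pr, λ)` where `Pr = Σ_x |xx⟩⟨xx|`. -/
theorem pinched_still_feasible {d : ℕ} (p : Fin d → ℝ) (hp : ∀ x, 0 ≤ p x)
    (hps : ∑ x, p x = 1) (ε : ℝ) (hε : ε ∈ Set.Ioo (0 : ℝ) 1)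
    (l : ℝ) (σ : Matrix (Fin d × Fin d) (Fin d × Fin d) ℂ)
    (ρAR : Matrix (Fin d × Fin d) (Fin d × Fin d) ℂ) (hρAR : ρAR = outer (schmidtVec p))
    (ρR : Matrix (Fin d) (Fin d) ℂ) (hρR : ρR = Matrix.diagonal fun x => (p x : ℂ))
    (Pr : Matrix (Fin d × Fin d) (Fin d × Fin d) ℂ)
    (hPr : Pr = Matrix.diagonal fun xy => if xy.1 = xy.2 then (1 : ℂ) else 0)
    (h1 : ((l : ℂ) • ((1 : Matrix (Fin d) (Fin d) ℂ) ⊗ₖ ρR) - σ).PosSemidef)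
    (h2 : 1 - ε ^ 2 ≤ ((ρAR * σ).trace).re)
    (h3 : (ρR - ptraceA σ).PosSemidef)
    (h4 : σ.PosSemidef) :
    ((l : ℂ) • ((1 : Matrix (Fin d) (Fin d) ℂ) ⊗ₖ ρR) - Pr * σ * Pr).PosSemidef ∧
    1 - ε ^ 2 ≤ ((ρAR * (Pr * σ * Pr)).trace).re ∧
    (ρR - ptraceA (Pr * σ * Pr)).PosSemidef ∧
    (Pr * σ * Pr).PosSemidef := by
  have hPrH : Pr.conjTranspose = Pr := by
    rw [hPr]
    ext i j
    by_cases hij : i = j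
    · subst hij
      by_cases h : i.1 = i.2 <;> simp [Matrix.conjTranspose_apply, h]
    · simp [Matrix.conjTranspose_apply, Matrix.diagonal_apply_ne, hij, Ne.symm hij]
  -- (4)
  have h4' : (Pr * σ * Pr).PosSemidef := by
    have := h4.mul_mul_conjTranspose_same Pr
    rwa [hPrH] at this
  -- the big kronecker factor is diagonal
  have hkron : ((1 : Matrix (Fin d) (Fin d) ℂ) ⊗ₖ ρR)
      = Matrix.diagonal (fun xy : Fin d × Fin d => (p xy.2 : ℂ)) := by
    rw [hρR, ← Matrix.diagonal_one, Matrix.diagonal_kronecker_diagonal]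
    simp
  -- l is nonnegative
  have hl : 0 ≤ l := by
    obtain ⟨x0, hx0⟩ : ∃ x, 0 < p x := by
      by_contra h
      push_neg at h
      have : ∑ x, p x = 0 := Finset.sum_eq_zero fun x _ => le_antisymm (h x) (hp x)
      rw [hps] at this; norm_num at this
    have e1 := psd_diag_entry h1 (x0, x0)
    have e2 := psd_diag_entry h4 (x0, x0)
    rw [Matrix.sub_apply, Matrix.smul_apply, hkron, Matrix.diagonal_apply_eq] at e1
    have : 0 ≤ ((l : ℂ) * (p x0 : ℂ)) := by
      have := add_nonneg e1 e2
      simpa using this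
    rw [← Complex.ofReal_mul, Complex.zero_le_real] at this
    nlinarith
  -- (1)
  have hdecomp : (l : ℂ) • ((1 : Matrix (Fin d) (Fin d) ℂ) ⊗ₖ ρR) - Pr * σ * Pr
      = Matrix.diagonal (fun xy : Fin d × Fin d =>
          if xy.1 = xy.2 then 0 else (l : ℂ) * (p xy.2 : ℂ))
        + Pr * ((l : ℂ) • ((1 : Matrix (Fin d) (Fin d) ℂ) ⊗ₖ ρR) - σ) * Pr := by
    rw [Matrix.mul_sub, Matrix.sub_mul, hkron, Matrix.mul_smul, Matrix.smul_mul, hPr,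
      Matrix.diagonal_mul_diagonal, Matrix.diagonal_mul_diagonal]
    ext xy xy'
    rcases eq_or_ne xy xy' with rfl | hne
    · by_cases h : xy.1 = xy.2 <;>
        simp [Matrix.diagonal_apply_eq, Matrix.add_apply, Matrix.sub_apply, h]
    · simp [Matrix.diagonal_apply_ne _ hne, Matrix.add_apply, Matrix.sub_apply]
  have h1' : ((l : ℂ) • ((1 : Matrix (Fin d) (Fin d) ℂ) ⊗ₖ ρR) - Pr * σ * Pr).PosSemidef := by
    rw [hdecomp]
    refine Matrix.PosSemidef.add ?_ ?_
    · refine Matrix.posSemidef_diagonal_iff.mpr fun xy => ?_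
      by_cases h : xy.1 = xy.2
      · simp [h]
      · simp only [h, if_false]
        rw [← Complex.ofReal_mul, Complex.zero_le_real]
        exact mul_nonneg hl (hp _)
    · have := h1.mul_mul_conjTranspose_same Pr
      rwa [hPrH] at this
  -- Pr absorbs ρAR
  have hPrρ : Pr * ρAR = ρAR := by
    rw [hPr, hρAR]
    ext i j
    rw [Matrix.diagonal_mul]
    by_cases h : i.1 = i.2 <;> simp [outer, schmidtVec, h]
  have hρPr : ρAR * Pr = ρAR := by
    rw [hPr, hρAR]
    ext i j
    rw [Matrix.mul_diagonal]
    by_cases h : j.1 = j.2 <;> simp [outer, schmidtVec, h]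
  -- (2)
  have h2' : (ρAR * (Pr * σ * Pr)).trace = (ρAR * σ).trace := by
    calc (ρAR * (Pr * σ * Pr)).trace = (ρAR * Pr * σ * Pr).trace := by
          simp [Matrix.mul_assoc]
      _ = (Pr * (ρAR * Pr * σ)).trace := by rw [Matrix.trace_mul_comm]
      _ = (ρAR * σ).trace := by rw [hρPr, ← Matrix.mul_assoc, hPrρ]
  -- (3)
  have hptrace : ptraceA (Pr * σ * Pr)
      = Matrix.diagonal (fun r : Fin d => σ (r, r) (r, r)) := by
    ext r r'
    show ∑ a, (Pr * σ * Pr) (a, r) (a, r') = _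
    rw [hPr]
    simp only [Matrix.mul_diagonal, Matrix.diagonal_mul]
    rcases eq_or_ne r r' with rfl | hne
    · rw [Matrix.diagonal_apply_eq]
      rw [Finset.sum_eq_single r]
      · simp
      · intro a _ ha; simp [ha]
      · simp
    · rw [Matrix.diagonal_apply_ne _ (by simpa using hne)]
      refine Finset.sum_eq_zero fun a _ => ?_
      rcases eq_or_ne a r with rfl | h
      · simp [hne]
      · simp [h]
  have h3' : (ρR - ptraceA (Pr * σ * Pr)).PosSemidef := by
    rw [hptrace, hρR, Matrix.diagonal_sub]
    refine Matrix.posSemidef_diagonal_iff.mpr fun r => ?_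
    have e1 := psd_diag_entry h3 r
    rw [Matrix.sub_apply, hρR, Matrix.diagonal_apply_eq] at e1
    have e2 : 0 ≤ ∑ a ∈ Finset.univ.erase r, σ (a, r) (a, r) :=
      Finset.sum_nonneg fun a _ => psd_diag_entry h4 (a, r)
    have hsplit : (ptraceA σ) r r
        = σ (r, r) (r, r) + ∑ a ∈ Finset.univ.erase r, σ (a, r) (a, r) := by
      show ∑ a, σ (a, r) (a, r) = _
      rw [← Finset.add_sum_erase _ _ (Finset.mem_univ r)]
    have := add_nonneg e1 e2
    rw [hsplit] at this
    convert this using 1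
    ring
  exact ⟨h1', by rw [h2']; exact h2, h3', h4'⟩
end

section
/- For any bipartite probability distribution P_{XY} on a finite set and ε ∈ (0,1), the partially smoothed conditional min-entropy with trace-distance smoothing equals the globally smoothed one: H_min^{ε,T}(X|Ẏ)_P = H_min^{ε,T}(X|Y)_P. -/
open Finset

/-- Generalized trace distance between a distribution `P` and a subnormalized
nonnegative function `S` on a finite set:
`T(P,S) = ½ Σ |P − S| + ½ |Σ (P − S)|`. -/
noncomputable def tDist {X Y : Type*} [Fintype X] [Fintype Y]
    (P S : X → Y → ℝ) : ℝ :=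
  (1 / 2) * (∑ x, ∑ y, |P x y - S x y|) + (1 / 2) * |∑ x, ∑ y, (P x y - S x y)|

private lemma exists_better {X Y : Type*} [Fintype X] [Fintype Y]
    (P : X → Y → ℝ) (hP : ∀ x y, 0 ≤ P x y) (hPs : ∑ x, ∑ y, P x y = 1)
    (S : X → Y → ℝ) (hS0 : ∀ x y, 0 ≤ S x y) (hsum : ∑ x, ∑ y, S x y ≤ 1) :
    ∃ S' : X → Y → ℝ, (∀ x y, 0 ≤ S' x y) ∧ (∀ x y, S' x y ≤ S x y) ∧
      tDist P S' = tDist P S ∧ (∀ y, ∑ x, S' x y ≤ ∑ x', P x' y) := by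
  classical
  set p : Y → ℝ := fun y => ∑ x', P x' y with hp
  set a : Y → ℝ := fun y => ∑ x, S x y with ha
  set E : Y → ℝ := fun y => ∑ x, max (S x y - P x y) 0 with hE
  set c : Y → ℝ := fun y => 1 - (a y - p y) / E y with hc
  set S' : X → Y → ℝ := fun x y =>
    if a y ≤ p y then S x y
    else if S x y ≤ P x y then S x y
    else P x y + c y * (S x y - P x y) with hS'
  have hapE : ∀ y, ¬ a y ≤ p y → a y - p y ≤ E y := by
    intro y hy
    have : a y - p y = ∑ x, (S x y - P x y) := by
      simp [ha, hp, Finset.sum_sub_distrib]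
    rw [this]
    exact Finset.sum_le_sum fun x _ => le_max_left _ _
  have hEpos : ∀ y, ¬ a y ≤ p y → 0 < E y := by
    intro y hy
    exact lt_of_lt_of_le (by linarith [lt_of_not_ge hy]) (hapE y hy)
  have hc0 : ∀ y, ¬ a y ≤ p y → 0 ≤ c y := by
    intro y hy
    have h1 : (a y - p y) / E y ≤ 1 := (div_le_one (hEpos y hy)).2 (hapE y hy)
    simp only [hc]; linarith
  have hc1 : ∀ y, ¬ a y ≤ p y → c y ≤ 1 := by
    intro y hy
    have h1 : 0 ≤ (a y - p y) / E y :=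
      div_nonneg (by linarith [lt_of_not_ge hy]) (hEpos y hy).le
    simp only [hc]; linarith
  -- key pointwise identity for the decrease
  have hdiff : ∀ x y, S x y - S' x y =
      (if a y ≤ p y then 0 else (1 - c y)) * max (S x y - P x y) 0 := by
    intro x y
    simp only [hS']
    by_cases hy : a y ≤ p y
    · simp [hy]
    · simp only [hy, if_false]
      by_cases hx : S x y ≤ P x y
      · simp [hx, max_eq_right (by linarith : S x y - P x y ≤ 0)]
      · rw [if_neg hx, max_eq_left (by linarith [lt_of_not_ge hx] : (0:ℝ) ≤ S x y - P x y)]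
        ring
  have hS'le : ∀ x y, S' x y ≤ S x y := by
    intro x y
    have h := hdiff x y
    by_cases hy : a y ≤ p y
    · simp [hy] at h; linarith
    · have h1 : 0 ≤ (1 - c y) * max (S x y - P x y) 0 :=
        mul_nonneg (by linarith [hc1 y hy]) (le_max_right _ _)
      simp only [hy, if_false] at h; linarith
  have hS'0 : ∀ x y, 0 ≤ S' x y := by
    intro x y
    simp only [hS']
    by_cases hy : a y ≤ p y
    · simp [hy, hS0 x y]
    · simp only [hy, if_false]
      by_cases hx : S x y ≤ P x y
      · simp [hx, hS0 x y]
      · rw [if_neg hx]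
        have := mul_nonneg (hc0 y hy) (by linarith [lt_of_not_ge hx] : (0:ℝ) ≤ S x y - P x y)
        linarith [hP x y]
  have habs : ∀ x y, |P x y - S' x y| = |P x y - S x y| - (S x y - S' x y) := by
    intro x y
    simp only [hS']
    by_cases hy : a y ≤ p y
    · simp [hy]
    · simp only [hy, if_false]
      by_cases hx : S x y ≤ P x y
      · simp [hx]
      · rw [if_neg hx]
        have hxp : (0:ℝ) ≤ S x y - P x y := by linarith [lt_of_not_ge hx]
        have h1 : |P x y - (P x y + c y * (S x y - P x y))| = c y * (S x y - P x y) := by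
          rw [show P x y - (P x y + c y * (S x y - P x y)) = -(c y * (S x y - P x y)) by ring,
            abs_neg, abs_of_nonneg (mul_nonneg (hc0 y hy) hxp)]
        have h2 : |P x y - S x y| = S x y - P x y := by
          rw [abs_of_nonpos (by linarith)]; ring
        rw [h1, h2]; ring
  -- per-column sums
  have hcol : ∀ y, ∑ x, S' x y ≤ p y := by
    intro y
    by_cases hy : a y ≤ p y
    · have : ∑ x, S' x y = a y := by
        simp only [ha]; exact Finset.sum_congr rfl fun x _ => by simp [hS', hy]
      linarith
    · have hsumdiff : ∑ x, (S x y - S' x y) = a y - p y := by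
        have : ∑ x, (S x y - S' x y) = (1 - c y) * E y := by
          rw [hE, Finset.mul_sum]
          exact Finset.sum_congr rfl fun x _ => by rw [hdiff x y, if_neg hy]
        rw [this, hc]
        field_simp
        rw [sub_sub_cancel, mul_comm, div_mul_cancel₀ _ (hEpos y hy).ne']
      have : ∑ x, (S x y - S' x y) = a y - ∑ x, S' x y := by
        simp [ha, Finset.sum_sub_distrib]
      rw [this] at hsumdiff
      linarith
  refine ⟨S', hS'0, hS'le, ?_, hcol⟩
  -- trace distance is preserved
  set K : ℝ := ∑ x, ∑ y, (S x y - S' x y) with hK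
  have hK0 : 0 ≤ K := by
    apply Finset.sum_nonneg; intro x _
    apply Finset.sum_nonneg; intro y _
    linarith [hS'le x y]
  have habsSum : ∑ x, ∑ y, |P x y - S' x y| = (∑ x, ∑ y, |P x y - S x y|) - K := by
    rw [hK, ← Finset.sum_sub_distrib]
    apply Finset.sum_congr rfl; intro x _
    rw [← Finset.sum_sub_distrib]
    exact Finset.sum_congr rfl fun y _ => habs x y
  have hsub : ∑ x, ∑ y, (P x y - S' x y) = (∑ x, ∑ y, (P x y - S x y)) + K := by
    rw [hK, ← Finset.sum_add_distrib]
    apply Finset.sum_congr rfl; intro x _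
    rw [← Finset.sum_add_distrib]
    exact Finset.sum_congr rfl fun y _ => by ring
  have hPSnn : 0 ≤ ∑ x, ∑ y, (P x y - S x y) := by
    have : ∑ x, ∑ y, (P x y - S x y) = (∑ x, ∑ y, P x y) - ∑ x, ∑ y, S x y := by
      rw [← Finset.sum_sub_distrib]
      exact Finset.sum_congr rfl fun x _ => by rw [Finset.sum_sub_distrib]
    rw [this, hPs]; linarith
  unfold tDist
  rw [habsSum, hsub, abs_of_nonneg hPSnn, abs_of_nonneg (by linarith)]
  ring

/-- for any classical joint distribution `P_{XY}` and `ε ∈ (0,1)`, the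
partially smoothed conditional min-entropy with trace-distance smoothing equals the
globally smoothed one. -/
theorem classical_partial_eq_global {X Y : Type*} [Fintype X] [Fintype Y]
    (P : X → Y → ℝ) (hP : ∀ x y, 0 ≤ P x y) (hPs : ∑ x, ∑ y, P x y = 1)
    (ε : ℝ) (hε : ε ∈ Set.Ioo (0 : ℝ) 1) :
    -Real.logb 2 (sInf {l : ℝ | 0 ≤ l ∧ ∃ S : X → Y → ℝ,
        (∀ x y, 0 ≤ S x y) ∧
        (∀ x y, S x y ≤ l * ∑ x', P x' y) ∧
        tDist P S ≤ ε ∧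
        (∀ y, ∑ x, S x y ≤ ∑ x', P x' y)}) =
    -Real.logb 2 (sInf {l : ℝ | 0 ≤ l ∧ ∃ S : X → Y → ℝ,
        (∀ x y, 0 ≤ S x y) ∧
        (∀ x y, S x y ≤ l * ∑ x', P x' y) ∧
        tDist P S ≤ ε ∧
        (∑ x, ∑ y, S x y ≤ 1)}) := by
  have hsets : {l : ℝ | 0 ≤ l ∧ ∃ S : X → Y → ℝ,
        (∀ x y, 0 ≤ S x y) ∧
        (∀ x y, S x y ≤ l * ∑ x', P x' y) ∧
        tDist P S ≤ ε ∧
        (∀ y, ∑ x, S x y ≤ ∑ x', P x' y)} =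
      {l : ℝ | 0 ≤ l ∧ ∃ S : X → Y → ℝ,
        (∀ x y, 0 ≤ S x y) ∧
        (∀ x y, S x y ≤ l * ∑ x', P x' y) ∧
        tDist P S ≤ ε ∧
        (∑ x, ∑ y, S x y ≤ 1)} := by
    ext l
    constructor
    · rintro ⟨hl, S, h0, hle, hT, hy⟩
      refine ⟨hl, S, h0, hle, hT, ?_⟩
      calc ∑ x, ∑ y, S x y = ∑ y, ∑ x, S x y := Finset.sum_comm
        _ ≤ ∑ y, ∑ x', P x' y := Finset.sum_le_sum fun y _ => hy y
        _ = ∑ x, ∑ y, P x y := Finset.sum_comm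
        _ = 1 := hPs
    · rintro ⟨hl, S, h0, hle, hT, hsum⟩
      obtain ⟨S', hS'0, hS'le, hTd, hcol⟩ := exists_better P hP hPs S h0 hsum
      exact ⟨hl, S', hS'0, fun x y => le_trans (hS'le x y) (hle x y),
        hTd ▸ hT, hcol⟩
  rw [hsets]
end

section
/- Let P_X be a probability distribution on a finite set, X₁,…,X_n i.i.d. with law P_X, and Z_j = −log₂ P_X(X_j). Then for every c > 0, E[ 2^{−Σ_j Z_j} · 𝟙{Σ_j Z_j ≥ log₂ c} ] ≤ (G/√n) · (1/c), where G is a constant depending only on the second and third moments of Z (and not on n or c). -/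
open Finset

lemma cb_bound : ∀ t : ℕ, (Nat.centralBinom t : ℝ) * Real.sqrt (2*t+1) ≤ 4^t := by
  intro t
  induction t with
  | zero => simp [Nat.centralBinom]
  | succ t ih =>
    have key : ((t:ℝ)+1) * ((Nat.centralBinom (t+1) : ℝ)) = 2*(2*t+1) * Nat.centralBinom t := by
      exact_mod_cast congrArg (fun n : ℕ => (n : ℝ)) (Nat.succ_mul_centralBinom_succ t)
    set c : ℝ := (Nat.centralBinom t : ℝ) with hc
    have hc0 : 0 ≤ c := by positivity
    set s1 := Real.sqrt (2*(t:ℝ)+1) with hs1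
    set s2 := Real.sqrt (2*(t:ℝ)+3) with hs2
    have hs10 : 0 ≤ s1 := Real.sqrt_nonneg _
    have hs20 : 0 ≤ s2 := Real.sqrt_nonneg _
    have hs1sq : s1^2 = 2*(t:ℝ)+1 := Real.sq_sqrt (by positivity)
    have hs2sq : s2^2 = 2*(t:ℝ)+3 := Real.sq_sqrt (by positivity)
    have hprod : s1 * s2 ≤ 2*((t:ℝ)+1) := by
      nlinarith [sq_nonneg (s1*s2), sq_nonneg (s1 - s2)]
    -- c * (2t+1) ≤ 4^t * s1
    have h1 : c * (2*(t:ℝ)+1) ≤ 4^t * s1 := by nlinarith [ih]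
    have goal' : ((t:ℝ)+1) * ((Nat.centralBinom (t+1) : ℝ) * s2) ≤ ((t:ℝ)+1) * 4^(t+1) := by
      have : ((t:ℝ)+1) * ((Nat.centralBinom (t+1) : ℝ) * s2) = 2*(2*t+1)*c * s2 := by
        rw [← mul_assoc, key]
      rw [this]
      have h2 : 2*(2*(t:ℝ)+1)*c * s2 ≤ 2 * (4^t * s1) * s2 := by nlinarith [h1]
      calc 2*(2*(t:ℝ)+1)*c * s2 ≤ 2 * (4^t * s1) * s2 := h2
        _ = 2 * (4:ℝ)^t * (s1 * s2) := by ring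
        _ ≤ 2 * (4:ℝ)^t * (2*((t:ℝ)+1)) := by
            apply mul_le_mul_of_nonneg_left hprod (by positivity)
        _ = ((t:ℝ)+1) * 4^(t+1) := by ring
    have := (mul_le_mul_iff_right₀ (show (0:ℝ) < (t:ℝ)+1 by positivity)).mp goal'
    have hcast : (2*((t+1:ℕ):ℝ)+1) = 2*(t:ℝ)+3 := by push_cast; ring
    show (Nat.centralBinom (t+1) : ℝ) * Real.sqrt (2*((t+1:ℕ):ℝ)+1) ≤ 4^(t+1)
    rw [hcast]
    exact this

lemma choose_half_bound (m : ℕ) : ((m.choose (m/2)) : ℝ) * Real.sqrt (m+1) ≤ Real.sqrt 2 * 2^m := by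
  rcases Nat.even_or_odd m with ⟨t, ht⟩ | ⟨t, ht⟩
  · subst ht
    have hdiv : (t + t) / 2 = t := by omega
    rw [hdiv]
    have hcb : (t+t).choose t = Nat.centralBinom t := by
      rw [Nat.centralBinom]; congr 1; omega
    rw [hcb]
    have := cb_bound t
    calc (Nat.centralBinom t : ℝ) * Real.sqrt ((t+t:ℕ)+1)
        = (Nat.centralBinom t : ℝ) * Real.sqrt (2*(t:ℝ)+1) := by push_cast; ring_nf
      _ ≤ 4^t := this
      _ ≤ Real.sqrt 2 * 2^(t+t) := by
          have h4 : (4:ℝ)^t = 2^(t+t) := by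
            rw [show (4:ℝ) = 2^2 by norm_num, ← pow_mul]; congr 1; omega
          rw [h4]
          nlinarith [Real.sqrt_le_sqrt (show (1:ℝ) ≤ 2 by norm_num), Real.sqrt_one,
            pow_pos (show (0:ℝ) < 2 by norm_num) (t+t)]
  · subst ht
    have hdiv : (2*t + 1) / 2 = t := by omega
    rw [hdiv]
    have hch : (2*t+1).choose t ≤ 2 * Nat.centralBinom t := by
      rcases t with _ | s
      · simp [Nat.centralBinom]
      · have hpas : (2*(s+1)+1).choose (s+1) = (2*(s+1)).choose s + (2*(s+1)).choose (s+1) := by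
          rw [show 2*(s+1)+1 = (2*(s+1))+1 from rfl, Nat.choose_succ_succ']
        have h2' : (2*(s+1)).choose s ≤ (2*(s+1)).choose ((2*(s+1))/2) := Nat.choose_le_middle _ _
        have h3' : (2*(s+1))/2 = s+1 := by omega
        rw [h3'] at h2'
        have hcbdef : Nat.centralBinom (s+1) = (2*(s+1)).choose (s+1) := rfl
        omega
    have hs23 : Real.sqrt ((2*t:ℝ)+1+1) ≤ Real.sqrt 2 * Real.sqrt (2*t+1) := by
      rw [← Real.sqrt_mul (by norm_num)]
      apply Real.sqrt_le_sqrt; push_cast; nlinarith [Nat.cast_nonneg (α := ℝ) t]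
    have hcb := cb_bound t
    have hs1 : (0:ℝ) ≤ Real.sqrt (2*t+1) := Real.sqrt_nonneg _
    calc ((2*t+1).choose t : ℝ) * Real.sqrt ((2*t+1:ℕ)+1)
        ≤ (2 * Nat.centralBinom t : ℝ) * (Real.sqrt 2 * Real.sqrt (2*(t:ℝ)+1)) := by
          apply mul_le_mul _ _ (Real.sqrt_nonneg _) (by positivity)
          · exact_mod_cast hch
          · calc Real.sqrt ((2*t+1:ℕ)+1:ℝ) = Real.sqrt ((2*t:ℝ)+1+1) := by push_cast; ring_nf
              _ ≤ _ := hs23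
        _ = Real.sqrt 2 * (2 * ((Nat.centralBinom t : ℝ) * Real.sqrt (2*(t:ℝ)+1))) := by
            push_cast; ring
        _ ≤ Real.sqrt 2 * (2 * 4^t) := by
            apply mul_le_mul_of_nonneg_left (by nlinarith [hcb]) (Real.sqrt_nonneg _)
        _ = Real.sqrt 2 * 2^(2*t+1) := by
            congr 1
            rw [show (4:ℝ) = 2^2 by norm_num, ← pow_mul, pow_succ]
            ring

lemma pow_tail {r : ℝ} (h0 : 0 ≤ r) (h1 : r < 1) (n : ℕ) (hn : 1 ≤ n) :
    r^n ≤ (r/(1-r)) / Real.sqrt n := by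
  have hn0 : (0:ℝ) < n := by exact_mod_cast hn
  have hsn : 0 < Real.sqrt n := Real.sqrt_pos.mpr hn0
  have hn1 : (1:ℝ) ≤ n := by exact_mod_cast hn
  have hsn' : Real.sqrt n ≤ n := by
    have h := Real.sqrt_le_sqrt (show (n:ℝ) ≤ (n:ℝ)^2 by nlinarith [hn1])
    rwa [Real.sqrt_sq hn0.le] at h
  have h1r : 0 < 1 - r := by linarith
  rcases eq_or_lt_of_le h0 with h | h
  · rw [← h, zero_pow (by omega)]; positivity
  · have hb : 1 + (n:ℝ) * (1/r - 1) ≤ (1/r)^n := by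
      have := one_add_mul_le_pow (a := 1/r - 1) (by nlinarith [one_div_pos.mpr h]) n
      calc 1 + (n:ℝ) * (1/r - 1) ≤ (1 + (1/r - 1))^n := this
        _ = (1/r)^n := by ring_nf
    have hrn : 0 < r^n := pow_pos h n
    have hinv : (1/r)^n = 1/(r^n) := by rw [one_div, inv_pow, one_div]
    rw [hinv] at hb
    have heq : (n:ℝ)*(1/r - 1) = n*((1-r)/r) := by field_simp
    have hstep : (n:ℝ) * ((1-r)/r) ≤ 1/(r^n) := by linarith [hb, heq.symm.le]
    have h2 : r^n * ((n:ℝ) * ((1-r)/r)) ≤ 1 := by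
      calc r^n * ((n:ℝ) * ((1-r)/r)) ≤ r^n * (1/(r^n)) := by
            apply mul_le_mul_of_nonneg_left hstep hrn.le
        _ = 1 := by field_simp
    have h3 : r^n * ((1-r) * n) ≤ r := by
      have h2' := mul_le_mul_of_nonneg_left h2 h.le
      have heq2 : r * (r^n * ((n:ℝ)*((1-r)/r))) = r^n * ((1-r)*n) := by field_simp
      nlinarith [h2', heq2]
    have h4 : r^n ≤ r/(1-r) * (1/n) := by
      rw [div_mul_div_comm, mul_one, le_div_iff₀ (by positivity)]
      exact h3
    calc r^n ≤ r/(1-r) * (1/n) := h4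
      _ ≤ r/(1-r) * (1/Real.sqrt n) := by
          apply mul_le_mul_of_nonneg_left _ (by positivity)
          apply one_div_le_one_div_of_le hsn hsn'
      _ = (r/(1-r)) / Real.sqrt n := by ring

lemma RI {ι Ω : Type*} [Fintype ι] [Fintype Ω] [DecidableEq ι] (p : ι → ℝ)
    (W : Ω → ℝ) (V : Ω → ι) (hW : ∀ i, (∑ u : Ω, if V u = i then W u else 0) = p i)
    (n : ℕ) (g : (Fin n → ι) → ℝ) :
    ∑ x : Fin n → ι, (∏ j, p (x j)) * g x
      = ∑ y : Fin n → Ω, (∏ j, W (y j)) * g (fun j => V (y j)) := by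
  classical
  have step1 : ∀ x : Fin n → ι, (∏ j, p (x j))
      = ∑ y : Fin n → Ω, ∏ j, (if V (y j) = x j then W (y j) else 0) := by
    intro x
    calc (∏ j, p (x j)) = ∏ j, (∑ u : Ω, if V u = x j then W u else 0) := by
          apply Finset.prod_congr rfl; intro j _; rw [hW]
      _ = ∑ y ∈ Fintype.piFinset (fun _ : Fin n => (univ : Finset Ω)),
            ∏ j, (if V (y j) = x j then W (y j) else 0) := by
          rw [Finset.prod_univ_sum]
      _ = ∑ y : Fin n → Ω, ∏ j, (if V (y j) = x j then W (y j) else 0) := by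
          rw [Fintype.piFinset_univ]
  calc ∑ x : Fin n → ι, (∏ j, p (x j)) * g x
      = ∑ x : Fin n → ι, ∑ y : Fin n → Ω,
          (∏ j, (if V (y j) = x j then W (y j) else 0)) * g x := by
        apply Finset.sum_congr rfl; intro x _; rw [step1, Finset.sum_mul]
    _ = ∑ y : Fin n → Ω, ∑ x : Fin n → ι,
          (∏ j, (if V (y j) = x j then W (y j) else 0)) * g x := Finset.sum_comm
    _ = ∑ y : Fin n → Ω, (∏ j, W (y j)) * g (fun j => V (y j)) := by
        apply Finset.sum_congr rfl; intro y _
        have hprod : ∀ x : Fin n → ι, (∏ j, (if V (y j) = x j then W (y j) else 0))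
            = if x = (fun j => V (y j)) then ∏ j, W (y j) else 0 := by
          intro x
          by_cases h : x = fun j => V (y j)
          · subst h; simp
          · rw [if_neg h]
            have : ∃ j, ¬ (V (y j) = x j) := by
              by_contra hc
              push_neg at hc
              exact h (funext fun j => (hc j).symm)
            obtain ⟨j, hj⟩ := this
            exact Finset.prod_eq_zero (Finset.mem_univ j) (if_neg hj)
        rw [Finset.sum_congr rfl (fun x _ => by rw [hprod x])]
        simp only [ite_mul, zero_mul]
        rw [Finset.sum_ite_eq' univ (fun j => V (y j)) (fun x => (∏ j, W (y j)) * g x)]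
        simp

lemma CL (n k : ℕ) (T : Finset (Fin n)) :
    (univ.filter (fun b : Fin n → Bool => (T.filter (fun j => b j)).card = k)).card
      ≤ T.card.choose k * 2^(n - T.card) := by
  classical
  set tgt := (T.powersetCard k) ×ˢ (Tᶜ.powerset) with htgt
  have hcard : tgt.card = T.card.choose k * 2^(n - T.card) := by
    rw [Finset.card_product, Finset.card_powersetCard, Finset.card_powerset,
      Finset.card_compl]
    simp
  rw [← hcard]
  apply Finset.card_le_card_of_injOn
    (fun b => (T.filter (fun j => b j), Tᶜ.filter (fun j => b j)))
  · intro b hb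
    simp only [Finset.mem_coe, Finset.mem_filter, Finset.mem_univ, true_and] at hb
    simp only [htgt, Finset.mem_coe, Finset.mem_product, Finset.mem_powersetCard, Finset.mem_powerset]
    exact ⟨⟨Finset.filter_subset _ _, hb⟩, Finset.filter_subset _ _⟩
  · intro b1 h1 b2 h2 heq
    simp only [Prod.mk.injEq] at heq
    funext j
    by_cases hj : j ∈ T
    · have := congrArg (fun s => j ∈ s) heq.1
      simp only [Finset.mem_filter, hj, true_and, eq_iff_iff] at this
      by_cases hb : b1 j
      · simp [hb, this.mp hb]
      · by_cases hb2 : b2 j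
        · exact absurd (this.mpr hb2) hb
        · simp [hb, hb2]
    · have hj' : j ∈ Tᶜ := Finset.mem_compl.mpr hj
      have := congrArg (fun s => j ∈ s) heq.2
      simp only [Finset.mem_filter, hj', true_and, eq_iff_iff] at this
      by_cases hb : b1 j
      · simp [hb, this.mp hb]
      · by_cases hb2 : b2 j
        · exact absurd (this.mpr hb2) hb
        · simp [hb, hb2]

set_option maxHeartbeats 2000000 in
lemma AC {ι : Type*} [Fintype ι] [DecidableEq ι] (p : ι → ℝ)
    (hp : ∀ x, 0 ≤ p x) (hps : ∑ x, p x = 1)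
    (i₀ i₁ : ι) (h01 : i₀ ≠ i₁) (hp0 : 0 < p i₀) (hp1 : 0 < p i₁)
    (hz : Real.logb 2 (p i₀) ≠ Real.logb 2 (p i₁)) :
    ∃ K : ℝ, 0 < K ∧ ∀ n : ℕ, 1 ≤ n → ∀ a : ℝ,
      ∑ x : Fin n → ι, (∏ j, p (x j)) *
        (if a ≤ (∑ j, (-(Real.logb 2 (p (x j))))) ∧
            (∑ j, (-(Real.logb 2 (p (x j))))) < a + 1 then (1:ℝ) else 0)
      ≤ K / Real.sqrt n := by
  classical
  set Z : ι → ℝ := fun i => -(Real.logb 2 (p i)) with hZ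
  set z₀ := Z i₀
  set z₁ := Z i₁
  set δ := z₁ - z₀ with hδdef
  have hδ : δ ≠ 0 := by
    simp only [hδdef, sub_ne_zero]
    simp only [Z, z₀, z₁, ne_eq, neg_inj]
    exact fun h => hz h.symm
  have hδabs : 0 < |δ| := abs_pos.mpr hδ
  set α := min (p i₀) (p i₁) with hαdef
  have hα : 0 < α := lt_min hp0 hp1
  have hsum2 : p i₀ + p i₁ ≤ 1 := by
    rw [← hps]
    have : ({i₀, i₁} : Finset ι).sum p = p i₀ + p i₁ := by
      rw [Finset.sum_pair h01]
    rw [← this]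
    exact Finset.sum_le_sum_of_subset_of_nonneg (Finset.subset_univ _)
      (fun i _ _ => hp i)
  have hα2 : 2*α ≤ 1 := by
    have h1 := min_le_left (p i₀) (p i₁)
    have h2 := min_le_right (p i₀) (p i₁)
    rw [hαdef]; linarith
  set ρ : ι → ℝ := fun i => p i - (if i = i₀ then α else 0) - (if i = i₁ then α else 0) with hρdef
  have hρ : ∀ i, 0 ≤ ρ i := by
    intro i
    simp only [hρdef]
    split_ifs with h1 h2 h3
    · exact absurd (h1.symm.trans h2) h01
    · rw [h1]; have := min_le_left (p i₀) (p i₁); rw [hαdef]; linarith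
    · rw [h3]; have := min_le_right (p i₀) (p i₁); rw [hαdef]; linarith
    · have := hp i; linarith
  set ω : Option ι → ℝ := fun o => o.elim α (fun i => ρ i / 2) with hωdef
  have hω : ∀ o, 0 ≤ ω o := by
    intro o; cases o with
    | none => exact hα.le
    | some i => exact div_nonneg (hρ i) (by norm_num)
  set W : Option ι × Bool → ℝ := fun u => ω u.1 with hWdef
  set V : Option ι × Bool → ι := fun u => u.1.elim (if u.2 then i₁ else i₀) id with hVdef
  have hρsum : ∑ i, ρ i = 1 - 2*α := by
    simp only [hρdef]
    rw [Finset.sum_sub_distrib, Finset.sum_sub_distrib, hps]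
    rw [Finset.sum_ite_eq' univ i₀ (fun _ => α), Finset.sum_ite_eq' univ i₁ (fun _ => α)]
    simp; ring
  have hW : ∀ i, (∑ u : Option ι × Bool, if V u = i then W u else 0) = p i := by
    intro i
    rw [Fintype.sum_prod_type]
    rw [Fintype.sum_option]
    have e1 : V (none, true) = i₁ := by simp [hVdef]
    have e2 : V (none, false) = i₀ := by simp [hVdef]
    have e3 : W (none, true) = α := rfl
    have e4 : W (none, false) = α := rfl
    have hnone : ∑ b : Bool, (if V (none, b) = i then W (none, b) else 0)
        = (if i₁ = i then α else 0) + (if i₀ = i then α else 0) := by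
      rw [Fintype.sum_bool, e1, e2, e3]
    have hsome : ∀ i' : ι, ∑ b : Bool, (if V (some i', b) = i then W (some i', b) else 0)
        = if i' = i then ρ i' else 0 := by
      intro i'
      have f1 : V (some i', true) = i' := rfl
      have f2 : V (some i', false) = i' := rfl
      have f3 : W (some i', true) = ρ i' / 2 := rfl
      have f4 : W (some i', false) = ρ i' / 2 := rfl
      rw [Fintype.sum_bool, f1, f2, f3]
      split_ifs <;> ring
    rw [hnone]
    rw [Finset.sum_congr rfl (fun i' _ => hsome i')]
    rw [Finset.sum_ite_eq' univ i (fun i' => ρ i')]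
    simp only [Finset.mem_univ, if_true]
    simp only [hρdef]
    by_cases h0 : i₀ = i <;> by_cases h1 : i₁ = i
    · exact absurd (h0.trans h1.symm) h01
    · rw [if_pos h0, if_neg h1, if_pos h0.symm, if_neg (fun h => h1 h.symm)]; ring
    · rw [if_neg h0, if_pos h1, if_neg (fun h => h0 h.symm), if_pos h1.symm]; ring
    · rw [if_neg h0, if_neg h1, if_neg (fun h => h0 h.symm), if_neg (fun h => h1 h.symm)]; ring
  -- constants
  set M : ℕ := ⌊1/|δ|⌋₊ + 1 with hMdef
  have hM1 : 1 ≤ M := Nat.le_add_left 1 _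
  set D : ℝ := (M:ℝ) * Real.sqrt 2 / Real.sqrt α with hDdef
  have hD : 0 < D := by
    apply div_pos (mul_pos (by exact_mod_cast hM1) (Real.sqrt_pos.mpr (by norm_num)))
      (Real.sqrt_pos.mpr hα)
  set r : ℝ := (2:ℝ)^α * (1-α) with hrdef
  have h1α : (0:ℝ) < 1 - α := by linarith
  have hr0 : 0 ≤ r := mul_nonneg (Real.rpow_nonneg (by norm_num) α) h1α.le
  have hr1 : r < 1 := by
    have h2α : (2:ℝ)^α = Real.exp (Real.log 2 * α) := Real.rpow_def_of_pos (by norm_num) α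
    have hle : 1 - α ≤ Real.exp (-α) := by linarith [Real.add_one_le_exp (-α)]
    have hmul : r ≤ Real.exp (Real.log 2 * α) * Real.exp (-α) := by
      rw [hrdef, h2α]
      exact mul_le_mul_of_nonneg_left hle (Real.exp_pos _).le
    have heq : Real.exp (Real.log 2 * α) * Real.exp (-α) = Real.exp (Real.log 2 * α - α) := by
      rw [← Real.exp_add]; ring_nf
    have hneg : Real.log 2 * α - α < 0 := by nlinarith [Real.log_two_lt_d9, hα]
    calc r ≤ Real.exp (Real.log 2 * α - α) := by rw [← heq]; exact hmul
      _ < Real.exp 0 := Real.exp_lt_exp.mpr hneg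
      _ = 1 := Real.exp_zero
  have hKpos : 0 < r/(1-r) + D := by
    have h1 : (0:ℝ) ≤ r/(1-r) := div_nonneg hr0 (by linarith)
    linarith
  refine ⟨r/(1-r) + D, hKpos, ?_⟩
  intro n hn a
  have hn0 : (0:ℝ) < n := by exact_mod_cast hn
  have hsn : 0 < Real.sqrt n := Real.sqrt_pos.mpr hn0
  have hDn : 0 ≤ D / Real.sqrt n := div_nonneg hD.le hsn.le
  have key : ∑ x : Fin n → ι, (∏ j, p (x j)) *
        (if a ≤ (∑ j, Z (x j)) ∧ (∑ j, Z (x j)) < a + 1 then (1:ℝ) else 0)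
      ≤ (r/(1-r) + D) / Real.sqrt n := by
    rw [RI p W V hW n (fun x => if a ≤ (∑ j, Z (x j)) ∧ (∑ j, Z (x j)) < a + 1 then (1:ℝ) else 0)]
    rw [← Equiv.sum_comp (Equiv.arrowProdEquivProdArrow (Fin n) (fun _ => Option ι) (fun _ => Bool)).symm]
    rw [Fintype.sum_prod_type]
    have he : ∀ (v : Fin n → Option ι) (b : Fin n → Bool),
        (Equiv.arrowProdEquivProdArrow (Fin n) (fun _ => Option ι) (fun _ => Bool)).symm (v, b)
          = fun j => (v j, b j) := fun _ _ => rfl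
    simp only [he]
    have hstep : ∀ v : Fin n → Option ι,
        ∑ b : Fin n → Bool, (∏ j, W ((fun j => (v j, b j)) j)) *
          (if a ≤ (∑ j, Z (V ((fun j => (v j, b j)) j))) ∧
              (∑ j, Z (V ((fun j => (v j, b j)) j))) < a + 1 then (1:ℝ) else 0)
        = (∏ j, ω (v j)) * ∑ b : Fin n → Bool,
          (if a ≤ (∑ j, Z (V (v j, b j))) ∧
              (∑ j, Z (V (v j, b j))) < a + 1 then (1:ℝ) else 0) := by
      intro v
      rw [Finset.mul_sum]
    rw [Finset.sum_congr rfl (fun v _ => hstep v)]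
    set Tf : (Fin n → Option ι) → Finset (Fin n) :=
      fun v => univ.filter (fun j => v j = none) with hTf
    -- per-v bound
    have hv : ∀ v : Fin n → Option ι,
        (∑ b : Fin n → Bool,
          (if a ≤ (∑ j, Z (V (v j, b j))) ∧
              (∑ j, Z (V (v j, b j))) < a + 1 then (1:ℝ) else 0))
        ≤ 2^n * ((2:ℝ)^((n:ℝ)*α) * (1/2)^((Tf v).card) + D / Real.sqrt n) := by
      intro v
      set T : Finset (Fin n) := Tf v with hT
      set m : ℕ := T.card with hm
      have hmn : m ≤ n := by
        calc m ≤ (univ : Finset (Fin n)).card := by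
              rw [hm, hT, hTf]; exact Finset.card_le_card (Finset.filter_subset _ _)
          _ = n := by simp
      set Cv : ℝ := ∑ j ∈ univ.filter (fun j => ¬ v j = none), Z (V (v j, false)) with hCv
      have hS : ∀ b : Fin n → Bool, (∑ j, Z (V (v j, b j)))
          = Cv + m * z₀ + ((T.filter (fun j => b j)).card : ℝ) * δ := by
        intro b
        rw [← Finset.sum_filter_add_sum_filter_not univ (fun j => v j = none)
          (fun j => Z (V (v j, b j)))]
        have hA : ∑ j ∈ univ.filter (fun j => v j = none), Z (V (v j, b j))
            = ∑ j ∈ T, (if b j then z₁ else z₀) := by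
          rw [hT, hTf]
          apply Finset.sum_congr rfl
          intro j hj
          have hvj : v j = none := by
            have := (Finset.mem_filter.mp hj).2
            exact this
          rw [hvj]
          cases hb : b j <;> simp [hb, hVdef] <;> rfl
        have hB : ∑ j ∈ T, (if b j then z₁ else z₀)
            = ((T.filter (fun j => b j)).card : ℝ) * z₁
              + ((T.filter (fun j => ¬ b j)).card : ℝ) * z₀ := by
          rw [Finset.sum_ite, Finset.sum_const, Finset.sum_const,
            nsmul_eq_mul, nsmul_eq_mul]
        have hkk : (T.filter (fun j => b j)).card + (T.filter (fun j => ¬ b j)).card = m :=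
          Finset.card_filter_add_card_filter_not _
        have hC : ∑ j ∈ univ.filter (fun j => ¬ v j = none), Z (V (v j, b j)) = Cv := by
          rw [hCv]
          apply Finset.sum_congr rfl
          intro j hj
          have hvj : ¬ v j = none := (Finset.mem_filter.mp hj).2
          obtain ⟨i, hi⟩ := Option.ne_none_iff_exists'.mp hvj
          rw [hi]
          rfl
        rw [hA, hB, hC]
        have hck : ((T.filter (fun j => b j)).card : ℝ)
            + ((T.filter (fun j => ¬ b j)).card : ℝ) = m := by exact_mod_cast hkk
        rw [hδdef]
        linear_combination z₀ * hck
      have hInner1 : (∑ b : Fin n → Bool,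
          (if a ≤ (∑ j, Z (V (v j, b j))) ∧
              (∑ j, Z (V (v j, b j))) < a + 1 then (1:ℝ) else 0)) ≤ 2^n := by
        calc (∑ b : Fin n → Bool,
            (if a ≤ (∑ j, Z (V (v j, b j))) ∧
                (∑ j, Z (V (v j, b j))) < a + 1 then (1:ℝ) else 0))
            ≤ ∑ _b : Fin n → Bool, (1:ℝ) :=
              Finset.sum_le_sum (fun b _ => by split_ifs <;> norm_num)
          _ = (Fintype.card (Fin n → Bool) : ℝ) := by
              rw [Finset.sum_const, Finset.card_univ, nsmul_eq_mul, mul_one]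
          _ = 2^n := by
              rw [Fintype.card_fun]
              simp
      have hInner2 : (∑ b : Fin n → Bool,
          (if a ≤ (∑ j, Z (V (v j, b j))) ∧
              (∑ j, Z (V (v j, b j))) < a + 1 then (1:ℝ) else 0))
          ≤ (M:ℝ) * (m.choose (m/2) : ℝ) * 2^(n-m) := by
        set pred : ℕ → Prop :=
          fun k => a ≤ Cv + m * z₀ + (k:ℝ) * δ ∧ Cv + m * z₀ + (k:ℝ) * δ < a + 1 with hpred
        set sK := (Finset.range (m+1)).filter pred with hsK
        have hcardle : ∀ b : Fin n → Bool, (T.filter (fun j => b j)).card ≤ m :=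
          fun b => Finset.card_le_card (Finset.filter_subset _ _)
        have hs_card : sK.card ≤ M := by
          rcases sK.eq_empty_or_nonempty with he' | hne
          · rw [he']; simp
          · set k₀ := sK.min' hne with hk₀
            have hsub : sK ⊆ Finset.Ico k₀ (k₀ + M) := by
              intro k hk
              rw [Finset.mem_Ico]
              refine ⟨Finset.min'_le sK k hk, ?_⟩
              have hpk : pred k := (Finset.mem_filter.mp hk).2
              have hpk0 : pred k₀ := (Finset.mem_filter.mp (sK.min'_mem hne)).2
              simp only [hpred] at hpk hpk0
              have hk0k : (k₀:ℝ) ≤ k := by exact_mod_cast Finset.min'_le sK k hk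
              have habs : ((k:ℝ) - k₀) * |δ| < 1 := by
                have h1 : ((k:ℝ) - k₀) * δ < 1 := by nlinarith [hpk.1, hpk.2, hpk0.1, hpk0.2]
                have h2 : -1 < ((k:ℝ) - k₀) * δ := by nlinarith [hpk.1, hpk.2, hpk0.1, hpk0.2]
                have habs2 : |((k:ℝ) - k₀) * δ| < 1 := abs_lt.mpr ⟨h2, h1⟩
                rw [abs_mul, abs_of_nonneg (by linarith : (0:ℝ) ≤ (k:ℝ) - k₀)] at habs2
                exact habs2
              have hlt : ((k:ℝ) - k₀) < 1/|δ| := by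
                rw [lt_div_iff₀ hδabs]; exact habs
              have hM' : (1:ℝ)/|δ| < M := by
                rw [hMdef]; push_cast
                exact Nat.lt_floor_add_one (1/|δ|)
              have hfin : (k:ℝ) < k₀ + M := by linarith
              exact_mod_cast hfin
            calc sK.card ≤ (Finset.Ico k₀ (k₀ + M)).card := Finset.card_le_card hsub
              _ = M := by rw [Nat.card_Ico]; omega
        have h1 : ∀ b : Fin n → Bool,
            (if a ≤ (∑ j, Z (V (v j, b j))) ∧
                (∑ j, Z (V (v j, b j))) < a + 1 then (1:ℝ) else 0)
            = ∑ k ∈ sK, (if (T.filter (fun j => b j)).card = k then (1:ℝ) else 0) := by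
          intro b
          rw [Finset.sum_ite_eq sK ((T.filter (fun j => b j)).card) (fun _ => (1:ℝ))]
          have hiff : (a ≤ (∑ j, Z (V (v j, b j))) ∧ (∑ j, Z (V (v j, b j))) < a + 1)
              ↔ ((T.filter (fun j => b j)).card ∈ sK) := by
            constructor
            · intro hcond
              rw [hS b] at hcond
              refine Finset.mem_filter.mpr
                ⟨Finset.mem_range.mpr (Nat.lt_succ_of_le (hcardle b)), ?_⟩
              simp only [hpred]
              exact hcond
            · intro hmem
              have hp' := (Finset.mem_filter.mp hmem).2
              simp only [hpred] at hp'
              rw [hS b]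
              exact hp'
          rw [if_congr hiff rfl rfl]
        rw [Finset.sum_congr rfl (fun b _ => h1 b), Finset.sum_comm]
        have h2 : ∀ k, (∑ b : Fin n → Bool,
            (if (T.filter (fun j => b j)).card = k then (1:ℝ) else 0))
            ≤ (m.choose (m/2) : ℝ) * 2^(n-m) := by
          intro k
          rw [Finset.sum_boole]
          have hCL := CL n k T
          rw [← hm] at hCL
          have h3 : m.choose k ≤ m.choose (m/2) := Nat.choose_le_middle _ _
          have h4 : (univ.filter (fun b : Fin n → Bool =>
              (T.filter (fun j => b j)).card = k)).card ≤ m.choose (m/2) * 2^(n-m) :=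
            le_trans hCL (Nat.mul_le_mul_right _ h3)
          calc ((univ.filter (fun b : Fin n → Bool =>
              (T.filter (fun j => b j)).card = k)).card : ℝ)
              ≤ ((m.choose (m/2) * 2^(n-m) : ℕ) : ℝ) := by exact_mod_cast h4
            _ = (m.choose (m/2) : ℝ) * 2^(n-m) := by push_cast; ring
        calc (∑ k ∈ sK, ∑ b : Fin n → Bool,
            (if (T.filter (fun j => b j)).card = k then (1:ℝ) else 0))
            ≤ ∑ _k ∈ sK, (m.choose (m/2) : ℝ) * 2^(n-m) :=
              Finset.sum_le_sum (fun k _ => h2 k)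
          _ = (sK.card : ℝ) * ((m.choose (m/2) : ℝ) * 2^(n-m)) := by
              rw [Finset.sum_const, nsmul_eq_mul]
          _ ≤ (M:ℝ) * ((m.choose (m/2) : ℝ) * 2^(n-m)) := by
              apply mul_le_mul_of_nonneg_right _ (by positivity)
              exact_mod_cast hs_card
          _ = (M:ℝ) * (m.choose (m/2) : ℝ) * 2^(n-m) := by ring
      rcases lt_or_ge (m:ℝ) ((n:ℝ)*α) with hcase | hcase
      · calc (∑ b : Fin n → Bool,
            (if a ≤ (∑ j, Z (V (v j, b j))) ∧
                (∑ j, Z (V (v j, b j))) < a + 1 then (1:ℝ) else 0))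
            ≤ 2^n := hInner1
          _ ≤ 2^n * ((2:ℝ)^((n:ℝ)*α) * (1/2)^m + D / Real.sqrt n) := by
              have h2m : (2:ℝ)^(m:ℝ) ≤ (2:ℝ)^((n:ℝ)*α) :=
                Real.rpow_le_rpow_of_exponent_le one_le_two hcase.le
              rw [Real.rpow_natCast] at h2m
              have hpos : (0:ℝ) < 2^m := by positivity
              have hx : (1:ℝ) ≤ (2:ℝ)^((n:ℝ)*α) * (1/2)^m := by
                have hh : (1/2:ℝ)^m = ((2:ℝ)^m)⁻¹ := by rw [one_div, inv_pow]
                rw [hh, ← div_eq_mul_inv]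
                exact (one_le_div hpos).mpr h2m
              nlinarith [pow_pos (show (0:ℝ) < 2 by norm_num) n, hDn]
      · calc (∑ b : Fin n → Bool,
            (if a ≤ (∑ j, Z (V (v j, b j))) ∧
                (∑ j, Z (V (v j, b j))) < a + 1 then (1:ℝ) else 0))
            ≤ (M:ℝ) * (m.choose (m/2) : ℝ) * 2^(n-m) := hInner2
          _ ≤ 2^n * (D / Real.sqrt n) := by
              have hch := choose_half_bound m
              have hsm : 0 < Real.sqrt ((m:ℝ)+1) := Real.sqrt_pos.mpr (Nat.cast_add_one_pos m)
              have hsnα : 0 < Real.sqrt ((n:ℝ)*α) := Real.sqrt_pos.mpr (by positivity)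
              have hsle : Real.sqrt ((n:ℝ)*α) ≤ Real.sqrt ((m:ℝ)+1) :=
                Real.sqrt_le_sqrt (by linarith)
              have hpow : (2:ℝ)^(n-m) = 2^n / 2^m := by
                rw [eq_div_iff (by positivity : ((2:ℝ)^m) ≠ 0)]
                rw [← pow_add]
                congr 1
                omega
              have hdiv : ((m.choose (m/2)):ℝ) ≤ Real.sqrt 2 * 2^m / Real.sqrt ((m:ℝ)+1) := by
                rw [le_div_iff₀ hsm]
                exact hch
              calc (M:ℝ) * (m.choose (m/2) : ℝ) * 2^(n-m)
                  ≤ (M:ℝ) * (Real.sqrt 2 * 2^m / Real.sqrt ((m:ℝ)+1)) * 2^(n-m) := by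
                    apply mul_le_mul_of_nonneg_right
                      (mul_le_mul_of_nonneg_left hdiv (by positivity)) (by positivity)
                _ = 2^n * ((M:ℝ) * Real.sqrt 2 / Real.sqrt ((m:ℝ)+1)) := by
                    rw [hpow]
                    field_simp
                _ ≤ 2^n * ((M:ℝ) * Real.sqrt 2 / Real.sqrt ((n:ℝ)*α)) := by
                    apply mul_le_mul_of_nonneg_left _ (by positivity)
                    apply div_le_div_of_nonneg_left (by positivity) hsnα hsle
                _ = 2^n * (D / Real.sqrt n) := by
                    congr 1
                    rw [Real.sqrt_mul hn0.le, hDdef, div_div,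
                      mul_comm (Real.sqrt n) (Real.sqrt α), ← div_div]
          _ ≤ 2^n * ((2:ℝ)^((n:ℝ)*α) * (1/2)^m + D / Real.sqrt n) := by
              have hxp : (0:ℝ) ≤ (2:ℝ)^((n:ℝ)*α) * (1/2)^m := by positivity
              nlinarith [pow_pos (show (0:ℝ) < 2 by norm_num) n]
    -- sum the per-v bound
    have hωsum : ∑ o : Option ι, ω o = 1/2 := by
      rw [Fintype.sum_option]
      have h1 : ∑ i, ω (some i) = (∑ i, ρ i)/2 := by
        rw [Finset.sum_div]
        apply Finset.sum_congr rfl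
        intro i _
        simp [hωdef]
      rw [h1, hρsum]
      show α + (1 - 2*α)/2 = 1/2
      ring
    have hω'sum : ∑ o : Option ι, (ω o * (if o = none then (1/2:ℝ) else 1)) = (1-α)/2 := by
      rw [Fintype.sum_option]
      have h1 : ∑ i, (ω (some i) * (if (some i : Option ι) = none then (1/2:ℝ) else 1))
          = (∑ i, ρ i)/2 := by
        rw [Finset.sum_div]
        apply Finset.sum_congr rfl
        intro i _
        simp [hωdef]
      rw [h1, hρsum]
      simp only [if_pos rfl]
      show α * (1/2) + (1 - 2*α)/2 = (1-α)/2
      ring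
    have hPS : ∀ (F : Option ι → ℝ),
        ∑ v : Fin n → Option ι, (∏ j, F (v j)) = (∑ o, F o)^n := by
      intro F
      rw [← Fintype.piFinset_univ,
        ← Finset.prod_univ_sum (fun _ : Fin n => (univ : Finset (Option ι))) (fun _ o => F o)]
      rw [Finset.prod_const, Finset.card_univ, Fintype.card_fin]
    have hprod1 : ∑ v : Fin n → Option ι, (∏ j, ω (v j)) = (1/2:ℝ)^n := by
      rw [hPS ω, hωsum]
    have hm12 : ∀ v : Fin n → Option ι,
        (∏ j, ω (v j)) * (1/2:ℝ)^((Tf v).card)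
        = ∏ j, (ω (v j) * (if v j = none then (1/2:ℝ) else 1)) := by
      intro v
      rw [Finset.prod_mul_distrib]
      congr 1
      rw [← Finset.prod_filter_mul_prod_filter_not univ (fun j => v j = none)
        (fun j => (if v j = none then (1/2:ℝ) else 1))]
      have h1 : ∏ j ∈ univ.filter (fun j => v j = none),
          (if v j = none then (1/2:ℝ) else 1) = (1/2:ℝ)^((Tf v).card) := by
        rw [Finset.prod_congr rfl (fun j hj => if_pos (Finset.mem_filter.mp hj).2),
          Finset.prod_const]
      have h2 : ∏ j ∈ univ.filter (fun j => ¬ v j = none),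
          (if v j = none then (1/2:ℝ) else 1) = 1 := by
        rw [Finset.prod_congr rfl (fun j hj => if_neg (Finset.mem_filter.mp hj).2)]
        exact Finset.prod_const_one
      rw [h1, h2, mul_one]
    have hprod2 : ∑ v : Fin n → Option ι, ((∏ j, ω (v j)) * (1/2:ℝ)^((Tf v).card))
        = (((1-α)/2):ℝ)^n := by
      rw [Finset.sum_congr rfl (fun v _ => hm12 v),
        hPS (fun o => ω o * (if o = none then (1/2:ℝ) else 1)), hω'sum]
    calc (∑ v : Fin n → Option ι, (∏ j, ω (v j)) * ∑ b : Fin n → Bool,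
          (if a ≤ (∑ j, Z (V (v j, b j))) ∧
              (∑ j, Z (V (v j, b j))) < a + 1 then (1:ℝ) else 0))
        ≤ ∑ v : Fin n → Option ι, (∏ j, ω (v j)) *
            (2^n * ((2:ℝ)^((n:ℝ)*α) * (1/2)^((Tf v).card) + D / Real.sqrt n)) :=
          Finset.sum_le_sum (fun v _ => mul_le_mul_of_nonneg_left (hv v)
            (Finset.prod_nonneg (fun j _ => hω _)))
      _ = 2^n * ((2:ℝ)^((n:ℝ)*α) * ((((1-α)/2):ℝ)^n) + (D / Real.sqrt n) * (1/2:ℝ)^n) := by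
          have expand : ∀ v ∈ (univ : Finset (Fin n → Option ι)),
              (∏ j, ω (v j)) * (2^n * ((2:ℝ)^((n:ℝ)*α) * (1/2)^((Tf v).card) + D / Real.sqrt n))
              = (2^n * (2:ℝ)^((n:ℝ)*α)) * ((∏ j, ω (v j)) * (1/2:ℝ)^((Tf v).card))
                + (2^n * (D / Real.sqrt n)) * (∏ j, ω (v j)) := fun v _ => by ring
          rw [Finset.sum_congr rfl expand, Finset.sum_add_distrib,
            ← Finset.mul_sum, ← Finset.mul_sum, hprod1, hprod2]
          ring
      _ = r^n + D / Real.sqrt n := by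
          have hrw : (2:ℝ)^((n:ℝ)*α) = ((2:ℝ)^α)^n := by
            rw [mul_comm ((n:ℝ)) α, Real.rpow_mul (by norm_num : (0:ℝ) ≤ 2),
              Real.rpow_natCast]
          have e1 : (2:ℝ)^n * (((1-α)/2):ℝ)^n = (1-α)^n := by
            rw [← mul_pow]
            congr 1
            ring
          have h2n : (2:ℝ)^n * (1/2:ℝ)^n = 1 := by
            rw [← mul_pow]
            norm_num
          rw [hrw, hrdef, mul_pow]
          linear_combination ((2:ℝ)^α)^n * e1 + (D / Real.sqrt n) * h2n
      _ ≤ (r/(1-r)) / Real.sqrt n + D / Real.sqrt n := by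
          have := pow_tail hr0 hr1 n hn
          linarith
      _ = (r/(1-r) + D) / Real.sqrt n := by
          rw [← add_div]

  exact key

/-- Polyanskiy–Poor–Verdú Lemma 47, specialized: for i.i.d.
`Z_j = −log₂ P_X(X_j)` with positive variance, there is a constant `G`
(independent of `n` and `c`) such that
`E[2^{−Σ_j Z_j} · 𝟙{Σ_j Z_j ≥ log₂ c}] ≤ (G/√n)·(1/c)` for all `n ≥ 1`, `c > 0`.
The expectation is written out explicitly over the product distribution. -/
theorem ppv_concentration {ι : Type*} [Fintype ι] (p : ι → ℝ)
    (hp : ∀ x, 0 ≤ p x) (hps : ∑ x, p x = 1)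
    (hvar : 0 < (∑ x, p x * (Real.logb 2 (p x)) ^ 2)
              - (∑ x, p x * Real.logb 2 (p x)) ^ 2) :
    ∃ G : ℝ, 0 < G ∧ ∀ n : ℕ, 1 ≤ n → ∀ c : ℝ, 0 < c →
      ∑ x : Fin n → ι, (∏ j, p (x j)) *
        (if Real.logb 2 c ≤ ∑ j, (-(Real.logb 2 (p (x j)))) then
          (2 : ℝ) ^ (-(∑ j, (-(Real.logb 2 (p (x j)))))) else 0)
      ≤ G / Real.sqrt n * (1 / c) := by
  classical
  -- extract two support points with distinct log-probabilities
  set μ : ℝ := ∑ x, p x * Real.logb 2 (p x) with hμ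
  have hvar' : 0 < ∑ x, p x * (Real.logb 2 (p x) - μ)^2 := by
    have hexp : ∑ x, p x * (Real.logb 2 (p x) - μ)^2
        = (∑ x, p x * (Real.logb 2 (p x))^2) - 2*μ*(∑ x, p x * Real.logb 2 (p x))
          + μ^2 * (∑ x, p x) := by
      have hterm : ∀ x ∈ (univ : Finset ι), p x * (Real.logb 2 (p x) - μ)^2
          = p x * (Real.logb 2 (p x))^2 - 2*μ*(p x * Real.logb 2 (p x))
            + μ^2 * p x := fun x _ => by ring
      rw [Finset.sum_congr rfl hterm, Finset.sum_add_distrib, Finset.sum_sub_distrib,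
        ← Finset.mul_sum, ← Finset.mul_sum]
    rw [hexp, hps, ← hμ]
    nlinarith [hvar]
  have hex0 : ∃ i₀, p i₀ ≠ 0 ∧ Real.logb 2 (p i₀) ≠ μ := by
    by_contra hc
    push_neg at hc
    have : ∑ x, p x * (Real.logb 2 (p x) - μ)^2 = 0 := by
      apply Finset.sum_eq_zero
      intro x _
      rcases eq_or_ne (p x) 0 with h | h
      · rw [h]; ring
      · rw [hc x h]; ring
    linarith
  obtain ⟨i₀, hi₀ne, hi₀μ⟩ := hex0
  have hex1 : ∃ i₁, p i₁ ≠ 0 ∧ Real.logb 2 (p i₁) ≠ Real.logb 2 (p i₀) := by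
    by_contra hc
    push_neg at hc
    have hall : ∀ x, p x * Real.logb 2 (p x) = p x * Real.logb 2 (p i₀) := by
      intro x
      rcases eq_or_ne (p x) 0 with h | h
      · rw [h]; ring
      · rw [hc x h]
    have : μ = Real.logb 2 (p i₀) := by
      rw [hμ, Finset.sum_congr rfl (fun x _ => hall x), ← Finset.sum_mul, hps, one_mul]
    exact hi₀μ this.symm
  obtain ⟨i₁, hi₁ne, hi₁z⟩ := hex1
  have h01 : i₀ ≠ i₁ := fun h => hi₁z (by rw [h])
  have hp0 : 0 < p i₀ := (hp i₀).lt_of_ne (Ne.symm hi₀ne)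
  have hp1 : 0 < p i₁ := (hp i₁).lt_of_ne (Ne.symm hi₁ne)
  obtain ⟨K, hK, hAC⟩ := AC p hp hps i₀ i₁ h01 hp0 hp1 (fun h => hi₁z h.symm)
  refine ⟨2*K, by linarith, ?_⟩
  intro n hn c hc
  have hn0 : (0:ℝ) < n := by exact_mod_cast hn
  have hsn : 0 < Real.sqrt n := Real.sqrt_pos.mpr hn0
  have hKsn : 0 ≤ K / Real.sqrt n := le_of_lt (div_pos hK hsn)
  set L := Real.logb 2 c with hL
  set zM := ∑ i, |Real.logb 2 (p i)| with hzM
  have hzM0 : 0 ≤ zM := Finset.sum_nonneg (fun i _ => abs_nonneg _)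
  have hSbound : ∀ x : Fin n → ι, (∑ j, (-(Real.logb 2 (p (x j))))) ≤ n * zM := by
    intro x
    calc (∑ j, (-(Real.logb 2 (p (x j))))) ≤ ∑ _j : Fin n, zM := by
          apply Finset.sum_le_sum
          intro j _
          calc -(Real.logb 2 (p (x j))) ≤ |Real.logb 2 (p (x j))| := neg_le_abs _
            _ ≤ zM := Finset.single_le_sum (fun i _ => abs_nonneg (Real.logb 2 (p i)))
                (Finset.mem_univ (x j))
      _ = n * zM := by rw [Finset.sum_const, Finset.card_univ, Fintype.card_fin, nsmul_eq_mul]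
  obtain ⟨N, hN⟩ := exists_nat_gt ((n:ℝ)*zM - L)
  have h2L : (2:ℝ)^L = c := Real.rpow_logb (by norm_num) (by norm_num) hc
  have hcoef : ∀ l : ℕ, (0:ℝ) ≤ (1/c)*(1/2)^l := fun l => by positivity
  have hpoint : ∀ x : Fin n → ι, (∏ j, p (x j)) *
        (if L ≤ (∑ j, (-(Real.logb 2 (p (x j))))) then
          (2:ℝ)^(-(∑ j, (-(Real.logb 2 (p (x j)))))) else 0)
      ≤ ∑ l ∈ Finset.range N, ((1/c)*(1/2)^l) * ((∏ j, p (x j)) *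
          (if (L + (l:ℝ)) ≤ (∑ j, (-(Real.logb 2 (p (x j))))) ∧
              (∑ j, (-(Real.logb 2 (p (x j))))) < (L + (l:ℝ)) + 1 then (1:ℝ) else 0)) := by
    intro x
    have hterm_nonneg : ∀ l ∈ Finset.range N, (0:ℝ) ≤ ((1/c)*(1/2)^l) * ((∏ j, p (x j)) *
        (if (L + (l:ℝ)) ≤ (∑ j, (-(Real.logb 2 (p (x j))))) ∧
            (∑ j, (-(Real.logb 2 (p (x j))))) < (L + (l:ℝ)) + 1 then (1:ℝ) else 0)) := by
      intro l _
      apply mul_nonneg (hcoef l)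
      apply mul_nonneg (Finset.prod_nonneg (fun j _ => hp _))
      split_ifs <;> norm_num
    by_cases hcond : L ≤ (∑ j, (-(Real.logb 2 (p (x j)))))
    · rw [if_pos hcond]
      by_cases hW : (∏ j, p (x j)) = 0
      · rw [hW]
        simp
      · have hWpos : 0 < ∏ j, p (x j) :=
          lt_of_le_of_ne (Finset.prod_nonneg (fun j _ => hp _)) (Ne.symm hW)
        set S := (∑ j, (-(Real.logb 2 (p (x j))))) with hS
        set l₀ := ⌊S - L⌋₊ with hl₀
        have hl₀1 : (l₀:ℝ) ≤ S - L := Nat.floor_le (by linarith)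
        have hl₀2 : S - L < l₀ + 1 := Nat.lt_floor_add_one _
        have hl₀N : l₀ < N := by
          have ha : (l₀:ℝ) ≤ (n:ℝ)*zM - L := le_trans hl₀1 (by linarith [hSbound x])
          have hb : (l₀:ℝ) < N := lt_of_le_of_lt ha hN
          exact_mod_cast hb
        apply le_trans _ (Finset.single_le_sum hterm_nonneg (Finset.mem_range.mpr hl₀N))
        rw [if_pos ⟨by linarith, by linarith⟩]
        have h2S : (2:ℝ)^(-S) ≤ (1/c)*(1/2)^l₀ := by
          have hmono : (2:ℝ)^(-S) ≤ (2:ℝ)^(-(L + (l₀:ℝ))) :=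
            Real.rpow_le_rpow_of_exponent_le one_le_two (by linarith)
          have heq : (2:ℝ)^(-(L + (l₀:ℝ))) = (1/c)*(1/2)^l₀ := by
            rw [neg_add, Real.rpow_add (by norm_num : (0:ℝ) < 2)]
            congr 1
            · rw [Real.rpow_neg (by norm_num), h2L, one_div]
            · rw [Real.rpow_neg (by norm_num), Real.rpow_natCast]
              rw [← inv_pow, one_div]
          rw [← heq]
          exact hmono
        calc (∏ j, p (x j)) * (2:ℝ)^(-S)
            ≤ (∏ j, p (x j)) * ((1/c)*(1/2)^l₀) :=
              mul_le_mul_of_nonneg_left h2S hWpos.le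
          _ = ((1/c)*(1/2)^l₀) * ((∏ j, p (x j)) * 1) := by ring
    · rw [if_neg hcond, mul_zero]
      exact Finset.sum_nonneg hterm_nonneg
  calc ∑ x : Fin n → ι, (∏ j, p (x j)) *
        (if L ≤ (∑ j, (-(Real.logb 2 (p (x j))))) then
          (2:ℝ)^(-(∑ j, (-(Real.logb 2 (p (x j)))))) else 0)
      ≤ ∑ x : Fin n → ι, ∑ l ∈ Finset.range N, ((1/c)*(1/2)^l) * ((∏ j, p (x j)) *
          (if (L + (l:ℝ)) ≤ (∑ j, (-(Real.logb 2 (p (x j))))) ∧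
              (∑ j, (-(Real.logb 2 (p (x j))))) < (L + (l:ℝ)) + 1 then (1:ℝ) else 0)) :=
        Finset.sum_le_sum (fun x _ => hpoint x)
    _ = ∑ l ∈ Finset.range N, ((1/c)*(1/2)^l) * (∑ x : Fin n → ι, (∏ j, p (x j)) *
          (if (L + (l:ℝ)) ≤ (∑ j, (-(Real.logb 2 (p (x j))))) ∧
              (∑ j, (-(Real.logb 2 (p (x j))))) < (L + (l:ℝ)) + 1 then (1:ℝ) else 0)) := by
        rw [Finset.sum_comm]
        apply Finset.sum_congr rfl
        intro l _
        rw [Finset.mul_sum]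
    _ ≤ ∑ l ∈ Finset.range N, ((1/c)*(1/2)^l) * (K / Real.sqrt n) := by
        apply Finset.sum_le_sum
        intro l _
        exact mul_le_mul_of_nonneg_left (hAC n hn (L + (l:ℝ))) (hcoef l)
    _ = (K / Real.sqrt n) * (1/c) * (∑ l ∈ Finset.range N, (1/2:ℝ)^l) := by
        rw [Finset.mul_sum]
        apply Finset.sum_congr rfl
        intro l _
        ring
    _ ≤ (K / Real.sqrt n) * (1/c) * 2 := by
        apply mul_le_mul_of_nonneg_left _ (mul_nonneg hKsn (by positivity))
        have hgeom := geom_sum_eq (show (1/2:ℝ) ≠ 1 by norm_num) N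
        rw [hgeom]
        have h1 : (0:ℝ) ≤ (1/2:ℝ)^N := by positivity
        have h2 : ((1/2:ℝ)^N - 1)/((1/2:ℝ) - 1) = 2*(1 - (1/2)^N) := by ring
        rw [h2]
        linarith
    _ = 2*K / Real.sqrt n * (1 / c) := by ring
end

section
/- For any joint probability distribution P_{XY} on finite sets and ε ∈ (0,1), the partially smoothed classical max mutual information equals the globally smoothed one: the optimization inf { Σ_y R(y) : P_X(x)R(y) ≥ Q(x,y), T(x,y) + Q(x,y) ≥ P(x,y), Σ T ≤ ε, Q_X = P_X, Q,T,R ≥ 0 } has the same value as the relaxation in which the constraint Q_X = P_X is replaced by Σ_{x,y} Q(x,y) = 1. -/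
open Finset

/-- the classical partially smoothed max mutual information optimization
equals its global relaxation: replacing the marginal constraint `Q_X = P_X` by the
normalization `Σ Q = 1` does not change the optimal value. -/
theorem classical_Imax_partial_eq_global {X Y : Type*} [Fintype X] [Fintype Y]
    (P : X → Y → ℝ) (hP : ∀ x y, 0 ≤ P x y) (hPs : ∑ x, ∑ y, P x y = 1)
    (ε : ℝ) (hε : ε ∈ Set.Ioo (0 : ℝ) 1) :
    sInf {v : ℝ | ∃ (Q T : X → Y → ℝ) (R : Y → ℝ),
      (∀ x y, 0 ≤ Q x y) ∧ (∀ x y, 0 ≤ T x y) ∧ (∀ y, 0 ≤ R y) ∧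
      (∀ x y, Q x y ≤ (∑ y', P x y') * R y) ∧
      (∀ x y, P x y ≤ T x y + Q x y) ∧
      (∑ x, ∑ y, T x y) ≤ ε ∧
      (∀ x, ∑ y, Q x y = ∑ y', P x y') ∧
      v = ∑ y, R y} =
    sInf {v : ℝ | ∃ (Q T : X → Y → ℝ) (R : Y → ℝ),
      (∀ x y, 0 ≤ Q x y) ∧ (∀ x y, 0 ≤ T x y) ∧ (∀ y, 0 ≤ R y) ∧
      (∀ x y, Q x y ≤ (∑ y', P x y') * R y) ∧
      (∀ x y, P x y ≤ T x y + Q x y) ∧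
      (∑ x, ∑ y, T x y) ≤ ε ∧
      (∑ x, ∑ y, Q x y = 1) ∧
      v = ∑ y, R y} := by
  congr 1
  ext v
  constructor
  · rintro ⟨Q, T, R, hQ, hT, hR, hQR, hPTQ, hTs, hQm, hv⟩
    refine ⟨Q, T, R, hQ, hT, hR, hQR, hPTQ, hTs, ?_, hv⟩
    calc ∑ x, ∑ y, Q x y = ∑ x, ∑ y, P x y := by
          exact Finset.sum_congr rfl fun x _ => hQm x
      _ = 1 := hPs
  · rintro ⟨Q, T, R, hQ, hT, hR, hQR, hPTQ, hTs, hQs, hv⟩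
    -- notation
    set s : X → ℝ := fun x => ∑ y, P x y with hs_def
    have hs : ∀ x, 0 ≤ s x := fun x => Finset.sum_nonneg fun y _ => hP x y
    have hRsum : 1 ≤ ∑ y, R y := by
      have h1 : ∑ x, ∑ y, Q x y ≤ ∑ x, ∑ y, s x * R y :=
        Finset.sum_le_sum fun x _ => Finset.sum_le_sum fun y _ => hQR x y
      have h2 : ∑ x, ∑ y, s x * R y = (∑ x, s x) * ∑ y, R y := by
        rw [Finset.sum_mul]
        exact Finset.sum_congr rfl fun x _ => (Finset.mul_sum _ _ _).symm
      have h3 : (∑ x, s x) = 1 := hPs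
      rw [hQs, h2, h3, one_mul] at h1
      exact h1
    set L : X → Y → ℝ := fun x y => max (P x y - T x y) 0 with hL_def
    set SL : X → ℝ := fun x => ∑ y, L x y with hSL_def
    set SU : X → ℝ := fun x => s x * ∑ y, R y with hSU_def
    set t : X → ℝ := fun x => if SU x = SL x then 0 else (s x - SL x) / (SU x - SL x)
      with ht_def
    set Q' : X → Y → ℝ := fun x y => L x y + t x * (s x * R y - L x y) with hQ'_def
    have hL0 : ∀ x y, 0 ≤ L x y := fun x y => le_max_right _ _
    have hLU : ∀ x y, L x y ≤ s x * R y := fun x y => by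
      have h1 : L x y ≤ Q x y := max_le (by linarith [hPTQ x y]) (hQ x y)
      exact h1.trans (hQR x y)
    have hLP : ∀ x y, L x y ≤ P x y := fun x y =>
      max_le (by linarith [hT x y]) (hP x y)
    have hSLs : ∀ x, SL x ≤ s x := fun x =>
      Finset.sum_le_sum fun y _ => hLP x y
    have hsSU : ∀ x, s x ≤ SU x := fun x =>
      le_mul_of_one_le_right (hs x) hRsum
    have ht01 : ∀ x, 0 ≤ t x ∧ t x ≤ 1 := by
      intro x
      by_cases h : SU x = SL x
      · simp [ht_def, h]
      · have hlt : SL x < SU x := lt_of_le_of_ne ((hSLs x).trans (hsSU x)) (Ne.symm h)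
        have hd : 0 < SU x - SL x := by linarith
        constructor
        · simp only [ht_def, if_neg h]
          exact div_nonneg (by linarith [hSLs x]) hd.le
        · simp only [ht_def, if_neg h]
          rw [div_le_one hd]
          linarith [hsSU x]
    have ht0 : ∀ x, 0 ≤ t x := fun x => (ht01 x).1
    have ht1 : ∀ x, t x ≤ 1 := fun x => (ht01 x).2
    refine ⟨Q', T, R, ?_, hT, hR, ?_, ?_, hTs, ?_, hv⟩
    · intro x y
      have := mul_nonneg (ht0 x) (by linarith [hLU x y] : (0:ℝ) ≤ s x * R y - L x y)
      simp only [hQ'_def]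
      linarith [hL0 x y]
    · intro x y
      have h1 : (0:ℝ) ≤ (1 - t x) * (s x * R y - L x y) :=
        mul_nonneg (by linarith [ht1 x]) (by linarith [hLU x y])
      simp only [hQ'_def]
      nlinarith
    · intro x y
      have := mul_nonneg (ht0 x) (by linarith [hLU x y] : (0:ℝ) ≤ s x * R y - L x y)
      have hPL : P x y - T x y ≤ L x y := le_max_left _ _
      simp only [hQ'_def]
      linarith
    · intro x
      have hsum : ∑ y, Q' x y = SL x + t x * (SU x - SL x) := by
        simp only [hQ'_def, hSL_def, hSU_def]
        rw [Finset.sum_add_distrib, ← Finset.mul_sum, Finset.sum_sub_distrib,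
          ← Finset.mul_sum]
      rw [hsum]
      show SL x + t x * (SU x - SL x) = s x
      by_cases h : SU x = SL x
      · have hse : s x = SL x := le_antisymm (h ▸ hsSU x) (hSLs x)
        simp [ht_def, h, hse]
      · simp only [ht_def, if_neg h]
        have hd : SU x - SL x ≠ 0 := fun hc => h (by linarith)
        rw [div_mul_cancel₀ _ hd]
        ring
end

section
/- In the classical max mutual information relaxation inf { Σ_y R(y) : P_X(x)R(y) ≥ P(x,y) − T(x,y), Σ T ≤ ε, Σ_{x,y} Q = 1, … }, any optimal R* satisfies Σ_y R*(y) ≥ 1, and one may assume T*(x,y) ≤ P(x,y) for all x, y; consequently for each x with P_X(x) > 0 one has R*(y) ≥ P_{Y|X=x}(y) − T*_{Y|X=x}(y) with Σ_y R*(y) ≥ 1 ≥ Σ_y (P_{Y|X=x}(y) − T*_{Y|X=x}(y)), so a normalized conditional distribution Q̃_{Y|X=x} with P_{Y|X=x} − T*_{Y|X=x} ≤ Q̃_{Y|X=x} ≤ R* exists. -/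
open Finset

lemma sandwich_exists {Y : Type*} [Fintype Y] (f g : Y → ℝ) (c : ℝ)
    (hfg : ∀ y, f y ≤ g y) (h1 : ∑ y, f y ≤ c) (h2 : c ≤ ∑ y, g y) :
    ∃ h : Y → ℝ, (∑ y, h y = c) ∧ ∀ y, f y ≤ h y ∧ h y ≤ g y := by
  set D := ∑ y, g y - ∑ y, f y with hDdef
  by_cases hD : D = 0
  · exact ⟨f, by linarith, fun y => ⟨le_refl _, hfg y⟩⟩
  · have hD0 : 0 ≤ D := by
      have := Finset.sum_le_sum (fun y (_ : y ∈ Finset.univ) => hfg y)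
      simp [hDdef]; linarith
    have hD' : 0 < D := lt_of_le_of_ne hD0 (Ne.symm hD)
    set t := (c - ∑ y, f y) / D with htdef
    have ht0 : 0 ≤ t := div_nonneg (by linarith) hD'.le
    have ht1 : t ≤ 1 := (div_le_one hD').mpr (by simp [hDdef]; linarith)
    refine ⟨fun y => f y + t * (g y - f y), ?_, fun y => ⟨?_, ?_⟩⟩
    · have hsum : ∑ y, (f y + t * (g y - f y)) = (∑ y, f y) + t * D := by
        rw [Finset.sum_add_distrib, ← Finset.mul_sum, Finset.sum_sub_distrib]
      rw [hsum, htdef, div_mul_cancel₀ _ hD]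
      ring
    · show f y ≤ f y + t * (g y - f y)
      nlinarith [hfg y]
    · show f y + t * (g y - f y) ≤ g y
      nlinarith [hfg y]

/-- sandwich lemma for the classical max mutual information relaxation:
for feasible `(Q, T, R)` in the relaxed optimization one has `Σ_y R(y) ≥ 1`; replacing
`T` by `min(T, P)` preserves feasibility (so one may assume `T ≤ P`); and whenever
`T ≤ P`, for each `x` with `P_X(x) > 0`, `R(y) ≥ P_{Y|X=x}(y) − T_{Y|X=x}(y)` with
`Σ_y R(y) ≥ 1 ≥ Σ_y (P_{Y|X=x}(y) − T_{Y|X=x}(y))`, so there exists a normalized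
conditional distribution `Q̃_{Y|X=x}` sandwiched between them. -/
theorem Imax_sandwich_lemma {X Y : Type*} [Fintype X] [Fintype Y]
    (P : X → Y → ℝ) (hP : ∀ x y, 0 ≤ P x y) (hPs : ∑ x, ∑ y, P x y = 1)
    (ε : ℝ) (hε : ε ∈ Set.Ioo (0 : ℝ) 1)
    (Q T : X → Y → ℝ) (R : Y → ℝ)
    (hQ0 : ∀ x y, 0 ≤ Q x y) (hT0 : ∀ x y, 0 ≤ T x y) (hR0 : ∀ y, 0 ≤ R y)
    (hQR : ∀ x y, Q x y ≤ (∑ y', P x y') * R y)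
    (hTQ : ∀ x y, P x y ≤ T x y + Q x y)
    (hTs : (∑ x, ∑ y, T x y) ≤ ε)
    (hQn : ∑ x, ∑ y, Q x y = 1) :
    (1 ≤ ∑ y, R y) ∧
    ((∀ x y, 0 ≤ min (T x y) (P x y)) ∧
      (∀ x y, P x y ≤ min (T x y) (P x y) + Q x y) ∧
      (∑ x, ∑ y, min (T x y) (P x y)) ≤ ε) ∧
    ((∀ x y, T x y ≤ P x y) →
      (∀ x, 0 < ∑ y', P x y' →
        (∀ y, P x y / (∑ y', P x y') - T x y / (∑ y', P x y') ≤ R y) ∧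
        (∑ y, (P x y / (∑ y', P x y') - T x y / (∑ y', P x y'))) ≤ 1) ∧
      ∃ Qt : X → Y → ℝ, ∀ x, 0 < ∑ y', P x y' →
        (∀ y, 0 ≤ Qt x y) ∧ (∑ y, Qt x y = 1) ∧
        (∀ y, P x y / (∑ y', P x y') - T x y / (∑ y', P x y') ≤ Qt x y ∧
          Qt x y ≤ R y)) := by
  -- Part 1: 1 ≤ ∑ R
  have hRs : (1:ℝ) ≤ ∑ y, R y := by
    have h2 : ∑ x, ∑ y, Q x y ≤ ∑ x, ∑ y, (∑ y', P x y') * R y :=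
      Finset.sum_le_sum fun x _ => Finset.sum_le_sum fun y _ => hQR x y
    have h3 : ∑ x, ∑ y, (∑ y', P x y') * R y = ∑ y, R y := by
      simp_rw [← Finset.mul_sum]
      rw [← Finset.sum_mul, hPs, one_mul]
    rw [h3] at h2; linarith [hQn]
  refine ⟨hRs, ⟨fun x y => le_min (hT0 x y) (hP x y), fun x y => ?_, ?_⟩, ?_⟩
  · rcases min_cases (T x y) (P x y) with ⟨h, _⟩ | ⟨h, _⟩ <;>
      [linarith [hTQ x y]; linarith [hQ0 x y]]
  · exact le_trans (Finset.sum_le_sum fun x _ =>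
      Finset.sum_le_sum fun y _ => min_le_left _ _) hTs
  · intro hTP
    have hmain : ∀ x, 0 < ∑ y', P x y' →
        (∀ y, P x y / (∑ y', P x y') - T x y / (∑ y', P x y') ≤ R y) ∧
        (∑ y, (P x y / (∑ y', P x y') - T x y / (∑ y', P x y'))) ≤ 1 := by
      intro x hx
      constructor
      · intro y
        rw [div_sub_div_same, div_le_iff₀ hx]
        have h1 := hQR x y
        have h2 := hTQ x y
        nlinarith
      · rw [Finset.sum_sub_distrib, ← Finset.sum_div, ← Finset.sum_div]
        rw [div_self hx.ne']
        have : 0 ≤ (∑ y, T x y) / ∑ y', P x y' :=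
          div_nonneg (Finset.sum_nonneg fun y _ => hT0 x y) hx.le
        linarith
    refine ⟨hmain, ?_⟩
    have hex : ∀ x, 0 < ∑ y', P x y' → ∃ h : Y → ℝ, (∑ y, h y = 1) ∧
        ∀ y, P x y / (∑ y', P x y') - T x y / (∑ y', P x y') ≤ h y ∧ h y ≤ R y := by
      intro x hx
      exact sandwich_exists _ R 1 (hmain x hx).1 (hmain x hx).2 hRs
    classical
    refine ⟨fun x => if hx : 0 < ∑ y', P x y' then Classical.choose (hex x hx)
      else fun _ => 0, ?_⟩
    intro x hx
    have spec := Classical.choose_spec (hex x hx)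
    simp only [dif_pos hx]
    refine ⟨fun y => ?_, spec.1, spec.2⟩
    have h1 := (spec.2 y).1
    have hf : 0 ≤ P x y / (∑ y', P x y') - T x y / (∑ y', P x y') := by
      rw [div_sub_div_same]
      exact div_nonneg (by linarith [hTP x y]) hx.le
    linarith
end
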